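/- arXiv:2111.00633 — 5 statements merged into one kernel-verified Lean document; each statement's English description precedes it below -/
import Mathlib

section
/- Let M = (S, A, P, R, H, μ) be a finite MDP, let z = (s_z, a_z) ∈ S × A, suppose the initial distribution μ is the point mass at s_z, and suppose H ≥ 2·ln(8 · |S|^{4|S|}). If there exists a (possibly non-stationary) deterministic policy π′ such that Q^{π′}_ε(s_z, a_z) ≥ f for some real ε ∈ (0,1] and some integer 0 ≤ f ≤ H, then there exists a stationary policy π : S → A such that Q_{1/2}(Σ_{h=0}^{⌊H/2⌋−1} 1[(s_h, a_h) = z]) ≥ ⌊(1/(2048 · |S|^{12|S|})) · ε · f⌋, where (s_0, a_0), …, (s_{H−1}, a_{H−1}), s_H is a random trajectory induced by executing π in M. -/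
set_option linter.unusedSectionVars false
set_option linter.unusedVariables false


open Finset

/-- Extend a trajectory `(s_0, …, s_H)` to a function `ℕ → S` (constant after time `H`). -/
def extT {S : Type} (H : ℕ) (T : Fin (H + 1) → S) : ℕ → S :=
  fun n => T ⟨min n H, Nat.lt_succ_of_le (Nat.min_le_right n H)⟩

/-- Probability of the trajectory with state sequence `f` under the (possibly non-stationary)
deterministic policy `π`: `p(T, M, π) = μ(s_0) · ∏_{h<H} P(s_{h+1} ∣ s_h, π_h(s_h))`. -/
noncomputable def trajP {S A : Type} (μ : S → ℝ) (P : S → A → S → ℝ)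
    (π : ℕ → S → A) (H : ℕ) (f : ℕ → S) : ℝ :=
  μ (f 0) * ∏ h ∈ Finset.range H, P (f h) (π h (f h)) (f (h + 1))

/-- Number of times the state-action pair `z` is visited during the first `K` steps of the
trajectory with state sequence `f`, when actions are chosen by the policy `π`. -/
def nVisits {S A : Type} [DecidableEq S] [DecidableEq A] (π : ℕ → S → A) (K : ℕ)
    (z : S × A) (f : ℕ → S) : ℕ :=
  ∑ h ∈ Finset.range K, if (f h, π h (f h)) = z then 1 else 0

/-- The `d`-quantile `Q_d(X) = sup {x ∣ Pr[X ≥ x] ≥ d}` of the random variable `X` of the random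
trajectory induced by executing the policy `π` in the `H`-horizon MDP `(μ, P)`. -/
noncomputable def quantNS {S A : Type} [Fintype S] (μ : S → ℝ) (P : S → A → S → ℝ)
    (π : ℕ → S → A) (H : ℕ) (X : (ℕ → S) → ℝ) (d : ℝ) : ℝ :=
  sSup {x : ℝ | d ≤ ∑ T : Fin (H + 1) → S,
    if x ≤ X (extT H T) then trajP μ P π H (extT H T) else 0}


section Stmt8AuxSection
namespace Stmt8Aux

variable {S A : Type} [Fintype S] [DecidableEq S] [DecidableEq A]

/-- product of transition probabilities along a path -/
noncomputable def prodP (P : S → A → S → ℝ) (ρ : ℕ → S → A) (t k : ℕ) (g : ℕ → S) : ℝ :=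
  ∏ h ∈ Finset.range k, P (g h) (ρ (t + h) (g h)) (g (h + 1))

/-- number of visits to `z` at (absolute) times `< T'` among the first `k` steps,
starting at absolute time `t`, under stationary policy `π`. -/
def cntv (π : S → A) (z : S × A) (T' t k : ℕ) (g : ℕ → S) : ℕ :=
  ∑ h ∈ Finset.range k, if t + h < T' ∧ (g h, π (g h)) = z then 1 else 0

/-- discounted visit indicator sum along a path for nonstationary policy -/
noncomputable def dsum (π' : ℕ → S → A) (z : S × A) (γ : ℝ) (t k : ℕ) (g : ℕ → S) : ℝ :=
  ∑ h ∈ Finset.range k, γ ^ h * (if (g h, π' (t + h) (g h)) = z then 1 else 0)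

lemma extT_zero_zero (T : Fin 1 → S) : extT 0 T 0 = T 0 := congrArg T (Subsingleton.elim _ _)

lemma cons_at {k : ℕ} (x : S) (T' : Fin (k+1) → S) (i : Fin (k+2)) (h : (i : ℕ) = 0) :
    (Fin.cons x T' : Fin (k+2) → S) i = x := by
  have : i = 0 := Fin.ext (by simp [h])
  rw [this, Fin.cons_zero]

lemma cons_at_succ {k : ℕ} (x : S) (T' : Fin (k+1) → S) (i : Fin (k+2)) (n : Fin (k+1))
    (h : (i : ℕ) = (n : ℕ) + 1) : (Fin.cons x T' : Fin (k+2) → S) i = T' n := by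
  have : i = n.succ := Fin.ext (by simp [h])
  rw [this, Fin.cons_succ]

lemma extT_cons_zero {k : ℕ} (x : S) (T' : Fin (k+1) → S) :
    extT (k+1) (Fin.cons x T') 0 = x := by
  unfold extT
  exact cons_at x T' _ (by simp)

lemma extT_cons_succ {k : ℕ} (x : S) (T' : Fin (k+1) → S) (n : ℕ) :
    extT (k+1) (Fin.cons x T') (n+1) = extT k T' n := by
  unfold extT
  exact cons_at_succ x T' _ ⟨min n k, Nat.lt_succ_of_le (Nat.min_le_right n k)⟩
    (by simp [Nat.succ_min_succ])

lemma sum_cons_split {k : ℕ} (F : (Fin (k+2) → S) → ℝ) :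
    ∑ T : Fin (k+2) → S, F T = ∑ x : S, ∑ T' : Fin (k+1) → S, F (Fin.cons x T') := by
  have h1 : ∑ p : S × (Fin (k+1) → S), F (Fin.cons p.1 p.2) = ∑ T : Fin (k+2) → S, F T :=
    Fintype.sum_equiv (Fin.consEquiv (fun _ => S)) _ _ (fun p => rfl)
  have h2 : ∑ p : S × (Fin (k+1) → S), F (Fin.cons p.1 p.2)
      = ∑ x : S, ∑ T' : Fin (k+1) → S, F (Fin.cons x T') := Fintype.sum_prod_type _
  rw [← h1, h2]

lemma sum_fin1 (F : (Fin 1 → S) → ℝ) (G : S → ℝ) (h : ∀ T, F T = G (T 0)) :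
    ∑ T : Fin 1 → S, F T = ∑ x : S, G x := by
  rw [Finset.sum_congr rfl (fun T _ => h T)]
  exact Fintype.sum_equiv (Equiv.funUnique (Fin 1) S) _ _
    (fun T => congrArg G (congrArg T (Subsingleton.elim _ _)))

lemma prodP_nonneg {P : S → A → S → ℝ} (hP0 : ∀ s a s', 0 ≤ P s a s')
    (ρ : ℕ → S → A) (t k : ℕ) (g : ℕ → S) : 0 ≤ prodP P ρ t k g :=
  Finset.prod_nonneg fun _ _ => hP0 _ _ _

lemma prodP_cons (P : S → A → S → ℝ) (ρ : ℕ → S → A) (t k : ℕ) (x : S) (T' : Fin (k+1) → S) :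
    prodP P ρ t (k+1) (extT (k+1) (Fin.cons x T')) =
      P x (ρ t x) (extT k T' 0) * prodP P ρ (t+1) k (extT k T') := by
  unfold prodP
  rw [Finset.prod_range_succ', mul_comm]
  congr 1
  · refine Finset.prod_congr rfl fun h _ => ?_
    have e2 : t + (h+1) = (t+1) + h := by omega
    rw [extT_cons_succ, extT_cons_succ, e2]

lemma cntv_cons (π : S → A) (z : S × A) (T' t k : ℕ) (x : S) (T'' : Fin (k+1) → S) :
    cntv π z T' t (k+1) (extT (k+1) (Fin.cons x T'')) =
      (if t < T' ∧ (x, π x) = z then 1 else 0) + cntv π z T' (t+1) k (extT k T'') := by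
  unfold cntv
  rw [Finset.sum_range_succ']
  rw [Finset.sum_congr rfl (fun h _ => by
    rw [show t + (h+1) = t + 1 + h from by omega, extT_cons_succ])]
  rw [extT_cons_zero]
  simp only [Nat.add_zero]
  omega

lemma dsum_cons (π' : ℕ → S → A) (z : S × A) (γ : ℝ) (t k : ℕ) (x : S) (T'' : Fin (k+1) → S) :
    dsum π' z γ t (k+1) (extT (k+1) (Fin.cons x T'')) =
      (if (x, π' t x) = z then (1:ℝ) else 0) + γ * dsum π' z γ (t+1) k (extT k T'') := by
  unfold dsum
  rw [Finset.sum_range_succ']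
  rw [Finset.sum_congr rfl (fun h _ => by
    rw [show t + (h+1) = t + 1 + h from by omega, extT_cons_succ, pow_succ,
      show γ ^ h * γ * (if (extT k T'' h, π' (t + 1 + h) (extT k T'' h)) = z then (1:ℝ) else 0)
        = γ * (γ ^ h * (if (extT k T'' h, π' (t + 1 + h) (extT k T'' h)) = z then (1:ℝ) else 0))
      from by ring])]
  rw [← Finset.mul_sum, extT_cons_zero, pow_zero, one_mul]
  simp only [Nat.add_zero]
  ring

/-- total mass of path measure -/
lemma sum_prodP (P : S → A → S → ℝ) (hP1 : ∀ s a, ∑ s', P s a s' = 1) (ρ : ℕ → S → A) :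
    ∀ (k t : ℕ) (W : S → ℝ),
      (∑ T : Fin (k+1) → S, W (extT k T 0) * prodP P ρ t k (extT k T)) = ∑ x, W x := by
  intro k
  induction k with
  | zero =>
    intro t W
    refine sum_fin1 _ W fun T => ?_
    rw [extT_zero_zero]
    simp [prodP]
  | succ k ih =>
    intro t W
    rw [sum_cons_split (fun T => W (extT (k+1) T 0) * prodP P ρ t (k+1) (extT (k+1) T))]
    have key : ∀ x : S,
        (∑ T' : Fin (k+1) → S, W (extT (k+1) (Fin.cons x T') 0)
          * prodP P ρ t (k+1) (extT (k+1) (Fin.cons x T'))) = W x := by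
      intro x
      have h2 : ∀ T' : Fin (k+1) → S,
          W (extT (k+1) (Fin.cons x T') 0) * prodP P ρ t (k+1) (extT (k+1) (Fin.cons x T'))
            = (W x * P x (ρ t x) (extT k T' 0)) * prodP P ρ (t+1) k (extT k T') := by
        intro T'; rw [extT_cons_zero, prodP_cons]; ring
      rw [Finset.sum_congr rfl (fun T' _ => h2 T'), ih (t+1) (fun y => W x * P x (ρ t x) y),
        ← Finset.mul_sum, hP1, mul_one]
    rw [Finset.sum_congr rfl (fun x _ => key x)]

/-- `B k x j = Pr[at least j visits to z within k steps from x]` under stationary policy π,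
where a visit means being at `z.1` and the policy choosing `z.2`. -/
noncomputable def B (P : S → A → S → ℝ) (π : S → A) (z : S × A) : ℕ → S → ℕ → ℝ
  | 0, _, j => if j = 0 then 1 else 0
  | (k+1), x, j => if j = 0 then 1 else
      ∑ y, P x (π x) y * B P π z k y (j - (if (x, π x) = z then 1 else 0))

/-- timed variant: visits only counted at absolute times `< T'`; `t` is current time. -/
noncomputable def Bt (P : S → A → S → ℝ) (π : S → A) (z : S × A) (T' : ℕ) :
    ℕ → ℕ → S → ℕ → ℝ
  | 0, _, _, j => if j = 0 then 1 else 0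
  | (k+1), t, x, j => if j = 0 then 1 else
      ∑ y, P x (π x) y * Bt P π z T' k (t+1) y (j - (if t < T' ∧ (x, π x) = z then 1 else 0))

/-- expected number of visits within k steps -/
noncomputable def EV (P : S → A → S → ℝ) (π : S → A) (z : S × A) : ℕ → S → ℝ
  | 0, _ => 0
  | (k+1), x => (if (x, π x) = z then (1:ℝ) else 0) + ∑ y, P x (π x) y * EV P π z k y

/-- discounted expected visits within k steps -/
noncomputable def dvv (P : S → A → S → ℝ) (π : S → A) (z : S × A) (γ : ℝ) : ℕ → S → ℝ
  | 0, _ => 0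
  | (k+1), x => (if (x, π x) = z then (1:ℝ) else 0) + γ * ∑ y, P x (π x) y * dvv P π z γ k y

/-- value iteration for the discounted MDP with reward `1[(s,a)=z]`, actions restricted to A₀ -/
noncomputable def uval (P : S → A → S → ℝ) (z : S × A) (γ : ℝ) (A₀ : Finset A)
    (hA : A₀.Nonempty) : ℕ → S → ℝ
  | 0, _ => 0
  | (k+1), s => A₀.sup' hA fun a =>
      (if (s, a) = z then (1:ℝ) else 0) + γ * ∑ y, P s a y * uval P z γ A₀ hA k y

/-- discounted value of the nonstationary policy π' started at time t -/
noncomputable def wval (P : S → A → S → ℝ) (π' : ℕ → S → A) (z : S × A) (γ : ℝ) :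
    ℕ → ℕ → S → ℝ
  | 0, _, _ => 0
  | (k+1), t, s => (if (s, π' t s) = z then (1:ℝ) else 0)
      + γ * ∑ y, P s (π' t s) y * wval P π' z γ k (t+1) y

section Blemmas

variable {P : S → A → S → ℝ} {π : S → A} {z : S × A}

lemma sum_P_const (hP1 : ∀ s a, ∑ s', P s a s' = 1) (x : S) (a : A) (c : ℝ) :
    ∑ y, P x a y * c = c := by rw [← Finset.sum_mul, hP1, one_mul]

lemma B_zero (k : ℕ) (x : S) : B P π z k x 0 = 1 := by cases k <;> simp [B]

lemma Bt_zero (T' k t : ℕ) (x : S) : Bt P π z T' k t x 0 = 1 := by cases k <;> simp [Bt]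

lemma B_nonneg (hP0 : ∀ s a s', 0 ≤ P s a s') : ∀ (k : ℕ) (x : S) (j : ℕ), 0 ≤ B P π z k x j := by
  intro k
  induction k with
  | zero => intro x j; by_cases hj : j = 0 <;> simp [B, hj]
  | succ k ih =>
    intro x j
    by_cases hj : j = 0
    · simp [B, hj]
    · rw [show B P π z (k+1) x j = ∑ y, P x (π x) y
          * B P π z k y (j - (if (x, π x) = z then 1 else 0)) from by rw [B, if_neg hj]]
      exact Finset.sum_nonneg fun y _ => mul_nonneg (hP0 _ _ _) (ih _ _)

lemma B_le_one (hP0 : ∀ s a s', 0 ≤ P s a s') (hP1 : ∀ s a, ∑ s', P s a s' = 1) : ∀ (k : ℕ) (x : S) (j : ℕ), B P π z k x j ≤ 1 := by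
  intro k
  induction k with
  | zero => intro x j; by_cases hj : j = 0 <;> simp [B, hj]
  | succ k ih =>
    intro x j
    by_cases hj : j = 0
    · simp [B, hj]
    · rw [show B P π z (k+1) x j = ∑ y, P x (π x) y
          * B P π z k y (j - (if (x, π x) = z then 1 else 0)) from by rw [B, if_neg hj]]
      calc ∑ y, P x (π x) y * B P π z k y (j - (if (x, π x) = z then 1 else 0))
          ≤ ∑ y, P x (π x) y * 1 :=
            Finset.sum_le_sum fun y _ => mul_le_mul_of_nonneg_left (ih _ _) (hP0 _ _ _)
        _ = 1 := by rw [sum_P_const hP1]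

lemma B_succ_ne (k : ℕ) (x : S) (j : ℕ) (hj : j ≠ 0) :
    B P π z (k+1) x j
      = ∑ y, P x (π x) y * B P π z k y (j - (if (x, π x) = z then 1 else 0)) := by
  rw [B, if_neg hj]

lemma B_mono_k (hP0 : ∀ s a s', 0 ≤ P s a s') : ∀ (k : ℕ) (x : S) (j : ℕ), B P π z k x j ≤ B P π z (k+1) x j := by
  intro k
  induction k with
  | zero =>
    intro x j
    by_cases hj : j = 0
    · simp [hj, B_zero]
    · rw [show B P π z 0 x j = 0 from by rw [B, if_neg hj]]
      exact B_nonneg hP0 _ _ _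
  | succ k ih =>
    intro x j
    by_cases hj : j = 0
    · simp [hj, B_zero]
    · rw [B_succ_ne _ _ _ hj, B_succ_ne _ _ _ hj]
      exact Finset.sum_le_sum fun y _ => mul_le_mul_of_nonneg_left (ih _ _) (hP0 _ _ _)

lemma B_anti (hP0 : ∀ s a s', 0 ≤ P s a s') (hP1 : ∀ s a, ∑ s', P s a s' = 1) : ∀ (k : ℕ) (x : S) (j j' : ℕ), j ≤ j' → B P π z k x j' ≤ B P π z k x j := by
  intro k
  induction k with
  | zero =>
    intro x j j' hjj
    by_cases hj' : j' = 0
    · have : j = 0 := by omega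
      simp [this, hj']
    · rw [show B P π z 0 x j' = 0 from by rw [B, if_neg hj']]
      exact B_nonneg hP0 _ _ _
  | succ k ih =>
    intro x j j' hjj
    by_cases hj : j = 0
    · rw [hj, B_zero]; exact B_le_one hP0 hP1 _ _ _
    · have hj' : j' ≠ 0 := by omega
      rw [B_succ_ne _ _ _ hj, B_succ_ne _ _ _ hj']
      exact Finset.sum_le_sum fun y _ =>
        mul_le_mul_of_nonneg_left (ih _ _ _ (by omega)) (hP0 _ _ _)

lemma B_le_root (hP0 : ∀ s a s', 0 ≤ P s a s') (hP1 : ∀ s a, ∑ s', P s a s' = 1) : ∀ (k : ℕ) (x : S) (j : ℕ), B P π z k x j ≤ B P π z k z.1 j := by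
  intro k
  induction k with
  | zero => intro x j; exact le_refl _
  | succ k ih =>
    intro x j
    by_cases hj : j = 0
    · simp [hj, B_zero]
    · by_cases hx : x = z.1
      · rw [hx]
      · have hvx : ((x, π x) = z) = False := by
          simp only [eq_iff_iff, iff_false]
          intro hc
          exact hx (congrArg Prod.fst hc)
        rw [B_succ_ne _ _ _ hj]
        simp only [hvx, if_false, Nat.sub_zero]
        calc ∑ y, P x (π x) y * B P π z k y j
            ≤ ∑ y, P x (π x) y * B P π z k z.1 j :=
              Finset.sum_le_sum fun y _ => mul_le_mul_of_nonneg_left (ih _ _) (hP0 _ _ _)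
          _ = B P π z k z.1 j := sum_P_const hP1 _ _ _
          _ ≤ B P π z (k+1) z.1 j := B_mono_k hP0 _ _ _

lemma B_submul (hP0 : ∀ s a s', 0 ≤ P s a s') (hP1 : ∀ s a, ∑ s', P s a s' = 1) : ∀ (k : ℕ) (x : S) (c d : ℕ), 1 ≤ c →
    B P π z k x (c + d) ≤ B P π z k x c * B P π z k z.1 d := by
  intro k
  induction k with
  | zero =>
    intro x c d hc
    rw [show B P π z 0 x (c+d) = 0 from by rw [B, if_neg (by omega)]]
    exact mul_nonneg (B_nonneg hP0 _ _ _) (B_nonneg hP0 _ _ _)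
  | succ k ih =>
    intro x c d hc
    by_cases hd : d = 0
    · rw [hd, B_zero, mul_one]
      simp
    · by_cases hvx : (x, π x) = z
      · by_cases hc1 : c = 1
        · -- c = 1, current state is a visit, so B (k+1) x 1 = 1
          have hB1 : B P π z (k+1) x c = 1 := by
            rw [B_succ_ne _ _ _ (by omega)]
            simp only [if_pos hvx, hc1, Nat.sub_self]
            rw [Finset.sum_congr rfl (fun y _ => by rw [B_zero, mul_one]), hP1]
          rw [hB1, one_mul, B_succ_ne _ _ _ (by omega)]
          simp only [if_pos hvx, hc1]
          have : 1 + d - 1 = d := by omega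
          rw [this]
          calc ∑ y, P x (π x) y * B P π z k y d
              ≤ ∑ y, P x (π x) y * B P π z k z.1 d :=
                Finset.sum_le_sum fun y _ =>
                  mul_le_mul_of_nonneg_left (B_le_root hP0 hP1 _ _ _) (hP0 _ _ _)
            _ = B P π z k z.1 d := sum_P_const hP1 _ _ _
            _ ≤ B P π z (k+1) z.1 d := B_mono_k hP0 _ _ _
        · -- c ≥ 2
          have hc2 : 2 ≤ c := by omega
          rw [B_succ_ne _ _ _ (by omega), B_succ_ne _ _ _ (by omega)]
          simp only [if_pos hvx]
          have e1 : c + d - 1 = (c - 1) + d := by omega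
          rw [e1]
          calc ∑ y, P x (π x) y * B P π z k y ((c-1) + d)
              ≤ ∑ y, P x (π x) y * (B P π z k y (c-1) * B P π z k z.1 d) :=
                Finset.sum_le_sum fun y _ =>
                  mul_le_mul_of_nonneg_left (ih _ _ _ (by omega)) (hP0 _ _ _)
            _ ≤ ∑ y, P x (π x) y * (B P π z k y (c-1) * B P π z (k+1) z.1 d) :=
                Finset.sum_le_sum fun y _ =>
                  mul_le_mul_of_nonneg_left
                    (mul_le_mul_of_nonneg_left (B_mono_k hP0 _ _ _) (B_nonneg hP0 _ _ _))
                    (hP0 _ _ _)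
            _ = (∑ y, P x (π x) y * B P π z k y (c-1)) * B P π z (k+1) z.1 d := by
                rw [Finset.sum_mul]
                exact Finset.sum_congr rfl fun y _ => by ring
      · -- no visit at current state
        rw [B_succ_ne _ _ _ (by omega), B_succ_ne _ _ _ (by omega)]
        simp only [if_neg hvx, Nat.sub_zero]
        calc ∑ y, P x (π x) y * B P π z k y (c + d)
            ≤ ∑ y, P x (π x) y * (B P π z k y c * B P π z k z.1 d) :=
              Finset.sum_le_sum fun y _ =>
                mul_le_mul_of_nonneg_left (ih _ _ _ hc) (hP0 _ _ _)
          _ ≤ ∑ y, P x (π x) y * (B P π z k y c * B P π z (k+1) z.1 d) :=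
              Finset.sum_le_sum fun y _ =>
                mul_le_mul_of_nonneg_left
                  (mul_le_mul_of_nonneg_left (B_mono_k hP0 _ _ _) (B_nonneg hP0 _ _ _))
                  (hP0 _ _ _)
          _ = (∑ y, P x (π x) y * B P π z k y c) * B P π z (k+1) z.1 d := by
              rw [Finset.sum_mul]
              exact Finset.sum_congr rfl fun y _ => by ring

lemma B_pow (hP0 : ∀ s a s', 0 ≤ P s a s') (hP1 : ∀ s a, ∑ s', P s a s' = 1) (k m : ℕ) (hm : 1 ≤ m) :
    ∀ i : ℕ, B P π z k z.1 (m * i) ≤ (B P π z k z.1 m) ^ i := by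
  intro i
  induction i with
  | zero => simp [B_zero]
  | succ i ih =>
    have e1 : m * (i+1) = m + m * i := by ring
    rw [e1, pow_succ]
    calc B P π z k z.1 (m + m * i)
        ≤ B P π z k z.1 m * B P π z k z.1 (m * i) := B_submul hP0 hP1 _ _ _ _ hm
      _ ≤ B P π z k z.1 m * (B P π z k z.1 m) ^ i :=
          mul_le_mul_of_nonneg_left ih (B_nonneg hP0 _ _ _)
      _ = (B P π z k z.1 m) ^ i * B P π z k z.1 m := by ring

lemma B_vanish : ∀ (k : ℕ) (x : S) (j : ℕ), k < j → B P π z k x j = 0 := by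
  intro k
  induction k with
  | zero => intro x j hj; rw [B, if_neg (by omega)]
  | succ k ih =>
    intro x j hj
    rw [B_succ_ne _ _ _ (by omega)]
    rw [Finset.sum_congr rfl (fun y _ => by rw [ih y _ (by
      by_cases hvv : (x, π x) = z <;> simp [hvv] <;> omega), mul_zero])]
    exact Finset.sum_const_zero

end Blemmas

section Btlemmas

variable {P : S → A → S → ℝ} {π : S → A} {z : S × A}

lemma Bt_succ_ne (T' k t : ℕ) (x : S) (j : ℕ) (hj : j ≠ 0) :
    Bt P π z T' (k+1) t x j = ∑ y, P x (π x) y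
      * Bt P π z T' k (t+1) y (j - (if t < T' ∧ (x, π x) = z then 1 else 0)) := by
  rw [Bt, if_neg hj]

lemma Bt_dead {T' : ℕ} : ∀ (k t : ℕ) (x : S) (j : ℕ), T' ≤ t → j ≠ 0 →
    Bt P π z T' k t x j = 0 := by
  intro k
  induction k with
  | zero => intro t x j ht hj; rw [Bt, if_neg hj]
  | succ k ih =>
    intro t x j ht hj
    rw [Bt_succ_ne _ _ _ _ _ hj]
    have hv : ¬ (t < T' ∧ (x, π x) = z) := by
      rintro ⟨h1, _⟩; omega
    rw [Finset.sum_congr rfl (fun y _ => by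
      rw [if_neg hv, Nat.sub_zero, ih (t+1) y j (by omega) hj, mul_zero])]
    exact Finset.sum_const_zero

lemma Bt_eq_B {T' : ℕ} : ∀ (k t : ℕ) (x : S) (j : ℕ), t ≤ T' → T' ≤ t + k →
    Bt P π z T' k t x j = B P π z (T' - t) x j := by
  intro k
  induction k with
  | zero =>
    intro t x j h1 h2
    have : T' - t = 0 := by omega
    rw [this, Bt, B]
  | succ k ih =>
    intro t x j h1 h2
    by_cases hj : j = 0
    · rw [hj, Bt_zero, B_zero]
    · by_cases ht : t < T'
      · rw [Bt_succ_ne _ _ _ _ _ hj]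
        have e1 : T' - t = (T' - (t+1)) + 1 := by omega
        rw [e1, B_succ_ne _ _ _ hj]
        refine Finset.sum_congr rfl fun y _ => ?_
        rw [ih (t+1) y _ (by omega) (by omega)]
        congr 2
        by_cases hvv : (x, π x) = z <;> simp [hvv, ht]
      · have hT : T' - t = 0 := by omega
        rw [hT, Bt_dead _ _ _ _ (by omega) hj]
        rw [show B P π z 0 x j = 0 from by rw [B, if_neg hj]]

end Btlemmas

section EVlemmas

variable {P : S → A → S → ℝ} {π : S → A} {z : S × A}

lemma EV_nonneg (hP0 : ∀ s a s', 0 ≤ P s a s') : ∀ (k : ℕ) (x : S), 0 ≤ EV P π z k x := by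
  intro k
  induction k with
  | zero => intro x; simp [EV]
  | succ k ih =>
    intro x
    rw [EV]
    have h1 : (0:ℝ) ≤ (if (x, π x) = z then (1:ℝ) else 0) := by positivity
    have h2 : (0:ℝ) ≤ ∑ y, P x (π x) y * EV P π z k y :=
      Finset.sum_nonneg fun y _ => mul_nonneg (hP0 _ _ _) (ih y)
    linarith

lemma EV_eq_sum_B (hP0 : ∀ s a s', 0 ≤ P s a s') (hP1 : ∀ s a, ∑ s', P s a s' = 1) :
    ∀ (k : ℕ) (x : S), EV P π z k x = ∑ j ∈ Finset.range k, B P π z k x (j+1) := by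
  intro k
  induction k with
  | zero => intro x; simp [EV]
  | succ k ih =>
    intro x
    have hB : ∀ j : ℕ, B P π z (k+1) x (j+1)
        = ∑ y, P x (π x) y * B P π z k y (j + 1 - (if (x, π x) = z then 1 else 0)) :=
      fun j => B_succ_ne _ _ _ (by omega)
    have hcomm : (∑ j ∈ Finset.range (k+1), B P π z (k+1) x (j+1))
        = ∑ y, ∑ j ∈ Finset.range (k+1),
            P x (π x) y * B P π z k y (j + 1 - (if (x, π x) = z then 1 else 0)) := by
      rw [Finset.sum_congr rfl (fun j _ => hB j)]
      exact Finset.sum_comm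
    rw [hcomm, EV]
    by_cases hvx : (x, π x) = z
    · rw [if_pos hvx]
      have e1 : ∀ y, (∑ j ∈ Finset.range (k+1),
            P x (π x) y * B P π z k y (j + 1 - (if (x, π x) = z then 1 else 0)))
          = P x (π x) y * (1 + EV P π z k y) := by
        intro y
        simp only [if_pos hvx, Nat.add_sub_cancel]
        rw [← Finset.mul_sum]
        congr 1
        rw [Finset.sum_range_succ' (fun j => B P π z k y j), B_zero, ← ih y, add_comm]
      rw [Finset.sum_congr rfl (fun y _ => e1 y)]
      have e2 : ∀ y:S, P x (π x) y * (1 + EV P π z k y)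
          = P x (π x) y + P x (π x) y * EV P π z k y := fun y => by ring
      rw [Finset.sum_congr rfl (fun y _ => e2 y), Finset.sum_add_distrib, hP1]
    · rw [if_neg hvx]
      have e1 : ∀ y, (∑ j ∈ Finset.range (k+1),
            P x (π x) y * B P π z k y (j + 1 - (if (x, π x) = z then 1 else 0)))
          = P x (π x) y * EV P π z k y := by
        intro y
        simp only [if_neg hvx, Nat.sub_zero]
        rw [← Finset.mul_sum]
        congr 1
        rw [Finset.sum_range_succ, B_vanish k y (k+1) (by omega), add_zero, ← ih y]
      rw [Finset.sum_congr rfl (fun y _ => e1 y), zero_add]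

end EVlemmas

section dvlemmas

variable {P : S → A → S → ℝ} {π : S → A} {z : S × A} {γ : ℝ}

lemma dvv_nonneg (hP0 : ∀ s a s', 0 ≤ P s a s') (hγ0 : 0 ≤ γ) :
    ∀ (k : ℕ) (x : S), 0 ≤ dvv P π z γ k x := by
  intro k
  induction k with
  | zero => intro x; simp [dvv]
  | succ k ih =>
    intro x
    rw [dvv]
    have h1 : (0:ℝ) ≤ (if (x, π x) = z then (1:ℝ) else 0) := by positivity
    have h2 : (0:ℝ) ≤ ∑ y, P x (π x) y * dvv P π z γ k y :=
      Finset.sum_nonneg fun y _ => mul_nonneg (hP0 _ _ _) (ih y)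
    nlinarith

lemma dvv_le_EV (hP0 : ∀ s a s', 0 ≤ P s a s') (hγ0 : 0 ≤ γ) (hγ1 : γ ≤ 1) :
    ∀ (k : ℕ) (x : S), dvv P π z γ k x ≤ EV P π z k x := by
  intro k
  induction k with
  | zero => intro x; simp [dvv, EV]
  | succ k ih =>
    intro x
    rw [dvv, EV]
    have h2 : (∑ y, P x (π x) y * dvv P π z γ k y) ≤ ∑ y, P x (π x) y * EV P π z k y :=
      Finset.sum_le_sum fun y _ => mul_le_mul_of_nonneg_left (ih y) (hP0 _ _ _)
    have h3 : (0:ℝ) ≤ ∑ y, P x (π x) y * dvv P π z γ k y :=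
      Finset.sum_nonneg fun y _ => mul_nonneg (hP0 _ _ _) (dvv_nonneg hP0 hγ0 _ _)
    nlinarith

end dvlemmas

section Ulemmas

variable {P : S → A → S → ℝ} {z : S × A} {γ : ℝ} {A₀ : Finset A}

lemma uval_nonneg (hA : A₀.Nonempty) (hP0 : ∀ s a s', 0 ≤ P s a s') (hγ0 : 0 ≤ γ) :
    ∀ (k : ℕ) (s : S), 0 ≤ uval P z γ A₀ hA k s := by
  intro k
  induction k with
  | zero => intro s; simp [uval]
  | succ k ih =>
    intro s
    have hA' := hA
    obtain ⟨a0, ha0⟩ := hA'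
    rw [uval]
    refine le_trans ?_ (Finset.le_sup' _ ha0)
    have h1 : (0:ℝ) ≤ (if (s, a0) = z then (1:ℝ) else 0) := by positivity
    have h2 : (0:ℝ) ≤ ∑ y, P s a0 y * uval P z γ A₀ hA k y :=
      Finset.sum_nonneg fun y _ => mul_nonneg (hP0 _ _ _) (ih y)
    nlinarith

lemma uval_mono (hA : A₀.Nonempty) (hP0 : ∀ s a s', 0 ≤ P s a s') (hγ0 : 0 ≤ γ) :
    ∀ (k : ℕ) (s : S), uval P z γ A₀ hA k s ≤ uval P z γ A₀ hA (k+1) s := by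
  intro k
  induction k with
  | zero => intro s; rw [show uval P z γ A₀ hA 0 s = 0 from rfl]; exact uval_nonneg hA hP0 hγ0 _ _
  | succ k ih =>
    intro s
    rw [uval, uval]
    refine Finset.sup'_mono_fun fun a _ => ?_
    have h2 : (∑ y, P s a y * uval P z γ A₀ hA k y)
        ≤ ∑ y, P s a y * uval P z γ A₀ hA (k+1) y :=
      Finset.sum_le_sum fun y _ => mul_le_mul_of_nonneg_left (ih y) (hP0 _ _ _)
    nlinarith

lemma uval_le_root (hA : A₀.Nonempty) (hP0 : ∀ s a s', 0 ≤ P s a s') (hP1 : ∀ s a, ∑ s', P s a s' = 1)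
    (hγ0 : 0 ≤ γ) (hγ1 : γ ≤ 1) :
    ∀ (k : ℕ) (x : S), uval P z γ A₀ hA k x ≤ uval P z γ A₀ hA k z.1 := by
  intro k
  induction k with
  | zero => intro x; exact le_refl _
  | succ k ih =>
    intro x
    by_cases hx : x = z.1
    · rw [hx]
    · rw [uval]
      refine Finset.sup'_le _ _ fun a ha => ?_
      have hr : (if (x, a) = z then (1:ℝ) else 0) = 0 := by
        rw [if_neg]
        intro hc
        exact hx (congrArg Prod.fst hc)
      rw [hr, zero_add]
      have h2 : (∑ y, P x a y * uval P z γ A₀ hA k y) ≤ uval P z γ A₀ hA k z.1 := by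
        calc (∑ y, P x a y * uval P z γ A₀ hA k y)
            ≤ ∑ y, P x a y * uval P z γ A₀ hA k z.1 :=
              Finset.sum_le_sum fun y _ => mul_le_mul_of_nonneg_left (ih y) (hP0 _ _ _)
          _ = uval P z γ A₀ hA k z.1 := sum_P_const hP1 _ _ _
      have h3 : 0 ≤ uval P z γ A₀ hA k z.1 := uval_nonneg hA hP0 hγ0 _ _
      have h4 : uval P z γ A₀ hA k z.1 ≤ uval P z γ A₀ hA (k+1) z.1 := uval_mono hA hP0 hγ0 _ _
      nlinarith

lemma wval_le_uval {π' : ℕ → S → A} {Hh : ℕ} (hA : A₀.Nonempty) (hP0 : ∀ s a s', 0 ≤ P s a s')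
    (hγ0 : 0 ≤ γ) (hmem : ∀ t s, t < Hh → π' t s ∈ A₀) :
    ∀ (k t : ℕ) (s : S), t + k ≤ Hh → wval P π' z γ k t s ≤ uval P z γ A₀ hA k s := by
  intro k
  induction k with
  | zero => intro t s _; exact le_refl 0
  | succ k ih =>
    intro t s hts
    rw [wval, uval]
    refine le_trans ?_ (Finset.le_sup' _ (hmem t s (by omega)))
    have h2 : (∑ y, P s (π' t s) y * wval P π' z γ k (t+1) y)
        ≤ ∑ y, P s (π' t s) y * uval P z γ A₀ hA k y :=
      Finset.sum_le_sum fun y _ =>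
        mul_le_mul_of_nonneg_left (ih (t+1) y (by omega)) (hP0 _ _ _)
    nlinarith

end Ulemmas

section Telescope

variable {P : S → A → S → ℝ} {π : S → A} {z : S × A} {γ : ℝ} {A₀ : Finset A}

/-- telescoping bound for a greedy policy w.r.t. `uval K` -/
lemma dvv_ge_greedy (hA : A₀.Nonempty) (hP0 : ∀ s a s', 0 ≤ P s a s')
    (hP1 : ∀ s a, ∑ s', P s a s' = 1) (hγ0 : 0 ≤ γ) (hγ1 : γ ≤ 1) (K : ℕ)
    (hgreedy : ∀ s : S, uval P z γ A₀ hA (K+1) s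
      = (if (s, π s) = z then (1:ℝ) else 0) + γ * ∑ y, P s (π s) y * uval P z γ A₀ hA K y) :
    ∀ (k : ℕ) (s : S),
      uval P z γ A₀ hA K s - γ ^ k * uval P z γ A₀ hA K z.1 ≤ dvv P π z γ k s := by
  intro k
  induction k with
  | zero =>
    intro s
    rw [pow_zero, one_mul, show dvv P π z γ 0 s = 0 from rfl]
    have := uval_le_root (z:=z) hA hP0 hP1 hγ0 hγ1 K s
    linarith
  | succ k ih =>
    intro s
    rw [dvv]
    have h1 : (∑ y, P s (π s) y * (uval P z γ A₀ hA K y - γ ^ k * uval P z γ A₀ hA K z.1))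
        ≤ ∑ y, P s (π s) y * dvv P π z γ k y :=
      Finset.sum_le_sum fun y _ => mul_le_mul_of_nonneg_left (ih y) (hP0 _ _ _)
    have h2 : (∑ y, P s (π s) y * (uval P z γ A₀ hA K y - γ ^ k * uval P z γ A₀ hA K z.1))
        = (∑ y, P s (π s) y * uval P z γ A₀ hA K y) - γ ^ k * uval P z γ A₀ hA K z.1 := by
      rw [Finset.sum_congr rfl (fun y _ => mul_sub (P s (π s) y) _ _), Finset.sum_sub_distrib,
        sum_P_const hP1]
    have h3 : uval P z γ A₀ hA K s ≤ uval P z γ A₀ hA (K+1) s := uval_mono hA hP0 hγ0 _ _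
    have h4 := hgreedy s
    have h5 : γ * (∑ y, P s (π s) y * (uval P z γ A₀ hA K y - γ ^ k * uval P z γ A₀ hA K z.1))
        ≤ γ * ∑ y, P s (π s) y * dvv P π z γ k y := by
      exact mul_le_mul_of_nonneg_left h1 hγ0
    rw [h2] at h5
    have e : γ * ((∑ y, P s (π s) y * uval P z γ A₀ hA K y) - γ ^ k * uval P z γ A₀ hA K z.1)
        = γ * (∑ y, P s (π s) y * uval P z γ A₀ hA K y) - γ^(k+1) * uval P z γ A₀ hA K z.1 := by
      ring
    rw [e] at h5
    have h6 : (if (s, π s) = z then (1:ℝ) else 0) + γ * (∑ y, P s (π s) y * uval P z γ A₀ hA K y)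
        - γ^(k+1) * uval P z γ A₀ hA K z.1
        ≤ (if (s, π s) = z then (1:ℝ) else 0) + γ * ∑ y, P s (π s) y * dvv P π z γ k y := by
      linarith
    calc uval P z γ A₀ hA K s - γ^(k+1) * uval P z γ A₀ hA K z.1
        ≤ uval P z γ A₀ hA (K+1) s - γ^(k+1) * uval P z γ A₀ hA K z.1 := by linarith
      _ = (if (s, π s) = z then (1:ℝ) else 0) + γ * (∑ y, P s (π s) y * uval P z γ A₀ hA K y)
            - γ^(k+1) * uval P z γ A₀ hA K z.1 := by rw [h4]
      _ ≤ _ := h6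

end Telescope

section Bridges

variable {P : S → A → S → ℝ} {z : S × A}

/-- bridge: path-sum of the visit-threshold indicator equals `Bt` -/
lemma sum_Bt (hP1 : ∀ s a, ∑ s', P s a s' = 1) (π : S → A) (T' : ℕ) :
    ∀ (k t : ℕ) (W : S → ℝ) (j : ℕ),
      (∑ T : Fin (k+1) → S, W (extT k T 0) * prodP P (fun _ => π) t k (extT k T) *
        (if j ≤ cntv π z T' t k (extT k T) then (1:ℝ) else 0))
      = ∑ x, W x * Bt P π z T' k t x j := by
  intro k
  induction k with
  | zero =>
    intro t W j
    refine sum_fin1 _ (fun x => W x * Bt P π z T' 0 t x j) fun T => ?_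
    rw [extT_zero_zero]
    have h1 : prodP P (fun _ => π) t 0 (extT 0 T) = 1 := by simp [prodP]
    have h2 : cntv π z T' t 0 (extT 0 T) = 0 := by simp [cntv]
    rw [h1, h2, mul_one]
    congr 1
    rw [Bt]
    exact if_congr (by omega) rfl rfl
  | succ k ih =>
    intro t W j
    rw [sum_cons_split (fun T => W (extT (k+1) T 0) * prodP P (fun _ => π) t (k+1) (extT (k+1) T) *
      (if j ≤ cntv π z T' t (k+1) (extT (k+1) T) then (1:ℝ) else 0))]
    have key : ∀ x : S,
        (∑ T'' : Fin (k+1) → S, W (extT (k+1) (Fin.cons x T'') 0)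
          * prodP P (fun _ => π) t (k+1) (extT (k+1) (Fin.cons x T''))
          * (if j ≤ cntv π z T' t (k+1) (extT (k+1) (Fin.cons x T'')) then (1:ℝ) else 0))
        = W x * Bt P π z T' (k+1) t x j := by
      intro x
      have step : ∀ T'' : Fin (k+1) → S,
          W (extT (k+1) (Fin.cons x T'') 0)
            * prodP P (fun _ => π) t (k+1) (extT (k+1) (Fin.cons x T''))
            * (if j ≤ cntv π z T' t (k+1) (extT (k+1) (Fin.cons x T'')) then (1:ℝ) else 0)
          = (W x * P x (π x) (extT k T'' 0)) * prodP P (fun _ => π) (t+1) k (extT k T'')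
            * (if j - (if t < T' ∧ (x, π x) = z then 1 else 0)
                ≤ cntv π z T' (t+1) k (extT k T'') then (1:ℝ) else 0) := by
        intro T''
        rw [extT_cons_zero, prodP_cons, cntv_cons]
        rw [if_congr (show (j ≤ (if t < T' ∧ (x, π x) = z then 1 else 0)
            + cntv π z T' (t+1) k (extT k T''))
          ↔ (j - (if t < T' ∧ (x, π x) = z then 1 else 0) ≤ cntv π z T' (t+1) k (extT k T''))
          from by omega) rfl rfl]
        ring
      rw [Finset.sum_congr rfl (fun T'' _ => step T'')]
      rw [ih (t+1) (fun y => W x * P x (π x) y) (j - (if t < T' ∧ (x, π x) = z then 1 else 0))]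
      by_cases hj : j = 0
      · subst hj
        simp only [Nat.zero_sub]
        rw [Finset.sum_congr rfl (fun y _ => by rw [Bt_zero, mul_one]), Bt_zero]
        rw [← Finset.mul_sum, hP1, mul_one]
      · rw [Bt_succ_ne _ _ _ _ _ hj, Finset.mul_sum]
        exact Finset.sum_congr rfl fun y _ => by ring
    rw [Finset.sum_congr rfl (fun x _ => key x)]

/-- bridge: path-sum of the discounted visit sum equals `wval` -/
lemma sum_wval (hP1 : ∀ s a, ∑ s', P s a s' = 1) (π' : ℕ → S → A) (γ : ℝ) :
    ∀ (k t : ℕ) (W : S → ℝ),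
      (∑ T : Fin (k+1) → S, W (extT k T 0) * prodP P π' t k (extT k T)
        * dsum π' z γ t k (extT k T))
      = ∑ x, W x * wval P π' z γ k t x := by
  intro k
  induction k with
  | zero =>
    intro t W
    refine sum_fin1 _ (fun x => W x * wval P π' z γ 0 t x) fun T => ?_
    rw [extT_zero_zero]
    have h3 : dsum π' z γ t 0 (extT 0 T) = 0 := by simp [dsum]
    rw [h3, mul_zero]
    simp [wval]
  | succ k ih =>
    intro t W
    rw [sum_cons_split (fun T => W (extT (k+1) T 0) * prodP P π' t (k+1) (extT (k+1) T)
      * dsum π' z γ t (k+1) (extT (k+1) T))]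
    have key : ∀ x : S,
        (∑ T'' : Fin (k+1) → S, W (extT (k+1) (Fin.cons x T'') 0)
          * prodP P π' t (k+1) (extT (k+1) (Fin.cons x T''))
          * dsum π' z γ t (k+1) (extT (k+1) (Fin.cons x T'')))
        = W x * wval P π' z γ (k+1) t x := by
      intro x
      have step : ∀ T'' : Fin (k+1) → S,
          W (extT (k+1) (Fin.cons x T'') 0)
            * prodP P π' t (k+1) (extT (k+1) (Fin.cons x T''))
            * dsum π' z γ t (k+1) (extT (k+1) (Fin.cons x T''))
          = (W x * P x (π' t x) (extT k T'' 0)) * prodP P π' (t+1) k (extT k T'')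
              * (if (x, π' t x) = z then (1:ℝ) else 0)
            + γ * ((W x * P x (π' t x) (extT k T'' 0)) * prodP P π' (t+1) k (extT k T'')
              * dsum π' z γ (t+1) k (extT k T'')) := by
        intro T''
        rw [extT_cons_zero, prodP_cons, dsum_cons]
        ring
      rw [Finset.sum_congr rfl (fun T'' _ => step T''), Finset.sum_add_distrib]
      have part1 : (∑ T'' : Fin (k+1) → S,
          (W x * P x (π' t x) (extT k T'' 0)) * prodP P π' (t+1) k (extT k T'')
            * (if (x, π' t x) = z then (1:ℝ) else 0))
          = W x * (if (x, π' t x) = z then (1:ℝ) else 0) := by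
        rw [Finset.sum_congr rfl (fun T'' _ => by
          rw [mul_comm ((W x * P x (π' t x) (extT k T'' 0)) * prodP P π' (t+1) k (extT k T''))
            (if (x, π' t x) = z then (1:ℝ) else 0)])]
        rw [← Finset.mul_sum]
        rw [sum_prodP P hP1 π' k (t+1) (fun y => W x * P x (π' t x) y)]
        rw [← Finset.mul_sum, hP1, mul_one, mul_comm]
      have part2 : (∑ T'' : Fin (k+1) → S,
          γ * ((W x * P x (π' t x) (extT k T'' 0)) * prodP P π' (t+1) k (extT k T'')
            * dsum π' z γ (t+1) k (extT k T'')))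
          = γ * ∑ y, (W x * P x (π' t x) y) * wval P π' z γ k (t+1) y := by
        rw [← Finset.mul_sum, ih (t+1) (fun y => W x * P x (π' t x) y)]
      rw [part1, part2, wval]
      rw [Finset.sum_congr rfl (fun y _ => by
        rw [show W x * P x (π' t x) y * wval P π' z γ k (t+1) y
          = W x * (P x (π' t x) y * wval P π' z γ k (t+1) y) from by ring])]
      rw [← Finset.mul_sum]
      ring
    rw [Finset.sum_congr rfl (fun x _ => key x)]

end Bridges

lemma sum_pow_div_eq (q : ℝ) (m : ℕ) (hm : 0 < m) :
    ∀ n : ℕ, (∑ j ∈ Finset.range (m * n), q ^ (j / m)) = m * ∑ i ∈ Finset.range n, q ^ i := by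
  intro n
  induction n with
  | zero => simp
  | succ n ih =>
    have e1 : m * (n+1) = m * n + m := by ring
    rw [e1]
    rw [Finset.range_eq_Ico, ← Finset.sum_Ico_consecutive _ (Nat.zero_le (m*n))
      (Nat.le_add_right (m*n) m), ← Finset.range_eq_Ico]
    rw [Finset.sum_Ico_eq_sum_range]
    have e2 : m * n + m - m * n = m := by omega
    rw [e2]
    have e3 : ∀ j ∈ Finset.range m, q ^ ((m * n + j)/m) = q ^ n := by
      intro j hj
      have hjm : j < m := Finset.mem_range.1 hj
      rw [Nat.mul_add_div hm, Nat.div_eq_of_lt hjm, Nat.add_zero]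
    rw [Finset.sum_congr rfl e3, Finset.sum_const, Finset.card_range, ih,
      Finset.sum_range_succ]
    push_cast
    ring

lemma geom_le_two {q : ℝ} (h0 : 0 ≤ q) (h2 : q ≤ 1/2) (n : ℕ) :
    (∑ i ∈ Finset.range n, q ^ i) ≤ 2 := by
  calc (∑ i ∈ Finset.range n, q ^ i) ≤ ∑ i ∈ Finset.range n, (1/2:ℝ) ^ i :=
        Finset.sum_le_sum fun i _ => pow_le_pow_left₀ h0 h2 i
    _ ≤ 2 := by
        rw [geom_sum_eq (by norm_num) n]
        have h3 : (0:ℝ) ≤ (1/2:ℝ)^n := by positivity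
        rw [div_le_iff_of_neg (by norm_num)]
        nlinarith

lemma nVisits_le (ρ : ℕ → S → A) (K : ℕ) (z : S × A) (g : ℕ → S) : nVisits ρ K z g ≤ K := by
  unfold nVisits
  calc (∑ h ∈ Finset.range K, if (g h, ρ h (g h)) = z then 1 else 0)
      ≤ ∑ h ∈ Finset.range K, 1 := Finset.sum_le_sum fun h _ => by split <;> omega
    _ = K := by simp

lemma nVisits_eq_cntv (π : S → A) (z : S × A) (T' K : ℕ) (g : ℕ → S) (hT : T' ≤ K) :
    nVisits (fun _ => π) T' z g = cntv π z T' 0 K g := by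
  unfold nVisits cntv
  rw [← Finset.sum_subset (Finset.range_subset_range.2 hT)
    (fun h _ hh => by
      have h1 : ¬ h < T' := fun hc => hh (Finset.mem_range.2 hc)
      rw [if_neg]
      rintro ⟨h2, _⟩
      omega)]
  refine Finset.sum_congr rfl fun h hh => ?_
  have hlt : h < T' := Finset.mem_range.1 hh
  refine if_congr ?_ rfl rfl
  constructor
  · intro hc; exact ⟨by omega, hc⟩
  · rintro ⟨_, hc⟩; exact hc

lemma dsum_ge {π' : ℕ → S → A} {z : S × A} {γ : ℝ} (hγ0 : 0 ≤ γ) (hγ1 : γ ≤ 1)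
    (K : ℕ) (g : ℕ → S) : γ^K * (nVisits π' K z g : ℝ) ≤ dsum π' z γ 0 K g := by
  unfold nVisits dsum
  rw [Nat.cast_sum, Finset.mul_sum]
  refine Finset.sum_le_sum fun h hh => ?_
  have h1 : γ^K ≤ γ^h := pow_le_pow_of_le_one hγ0 hγ1 (le_of_lt (Finset.mem_range.1 hh))
  simp only [Nat.zero_add]
  by_cases hc : (g h, π' h (g h)) = z
  · rw [if_pos hc, if_pos hc]
    push_cast
    nlinarith
  · rw [if_neg hc, if_neg hc]
    simp

lemma trajP_eq (μ : S → ℝ) (P : S → A → S → ℝ) (ρ : ℕ → S → A) (K : ℕ) (g : ℕ → S) :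
    trajP μ P ρ K g = μ (g 0) * prodP P ρ 0 K g := by
  unfold trajP prodP
  congr 1
  exact Finset.prod_congr rfl fun h _ => by rw [Nat.zero_add]

lemma trajP_nonneg {μ : S → ℝ} {P : S → A → S → ℝ} (hμ0 : ∀ s, 0 ≤ μ s)
    (hP0 : ∀ s a s', 0 ≤ P s a s') (ρ : ℕ → S → A) (K : ℕ) (g : ℕ → S) :
    0 ≤ trajP μ P ρ K g :=
  mul_nonneg (hμ0 _) (Finset.prod_nonneg fun _ _ => hP0 _ _ _)

lemma gamma_facts (T' : ℕ) (h1 : 1 ≤ T') :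
    ∃ γ : ℝ, (1/2 ≤ γ) ∧ (0 ≤ γ) ∧ (γ ≤ 1) ∧ (1/2 ≤ γ^T') ∧ (γ^T' ≤ 2/3) ∧
      (∀ K : ℕ, K ≤ 2*T'+1 → 1/8 ≤ γ^K) := by
  have hT'R : (1:ℝ) ≤ ((T' : ℕ):ℝ) := by exact_mod_cast h1
  have hu0 : (0:ℝ) < 1/(2*((T' : ℕ):ℝ)) := by
    apply div_pos one_pos
    linarith
  have hu2 : 1/(2*((T' : ℕ):ℝ)) ≤ 1/2 := by
    rw [div_le_div_iff₀ (by linarith) (by norm_num)]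
    linarith
  have hγhalf : (1/2:ℝ) ≤ 1 - 1/(2*((T' : ℕ):ℝ)) := by linarith
  have hγ0 : (0:ℝ) ≤ 1 - 1/(2*((T' : ℕ):ℝ)) := by linarith
  have hγ1 : 1 - 1/(2*((T' : ℕ):ℝ)) ≤ 1 := by linarith
  have hTu : ((T':ℕ):ℝ) * (1/(2*((T' : ℕ):ℝ))) = 1/2 := by
    field_simp
  have hγTlow : (1/2:ℝ) ≤ (1 - 1/(2*((T' : ℕ):ℝ)))^T' := by
    have h := one_add_mul_le_pow (a := -(1/(2*((T' : ℕ):ℝ)))) (by linarith) T'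
    have e1 : (1:ℝ) + ((T':ℕ):ℝ) * (-(1/(2*((T' : ℕ):ℝ)))) = 1/2 := by
      rw [mul_neg, hTu]; ring
    have e2 : ((1:ℝ) + -(1/(2*((T' : ℕ):ℝ))))^T' = (1 - 1/(2*((T' : ℕ):ℝ)))^T' := by
      ring_nf
    rw [e1, e2] at h
    exact h
  have hγThigh : (1 - 1/(2*((T' : ℕ):ℝ)))^T' ≤ 2/3 := by
    have ha1 : (3/2:ℝ) ≤ (1 + 1/(2*((T' : ℕ):ℝ)))^T' := by
      have h := one_add_mul_le_pow (a := 1/(2*((T' : ℕ):ℝ))) (by linarith) T'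
      rw [hTu] at h
      linarith
    have ha2 : (1 - 1/(2*((T' : ℕ):ℝ)))^T' * (1 + 1/(2*((T' : ℕ):ℝ)))^T' ≤ 1 := by
      rw [← mul_pow]
      have e : (1 - 1/(2*((T' : ℕ):ℝ))) * (1 + 1/(2*((T' : ℕ):ℝ)))
          = 1 - (1/(2*((T' : ℕ):ℝ)))^2 := by ring
      rw [e]
      exact pow_le_one₀ (by nlinarith) (by nlinarith)
    nlinarith [pow_nonneg hγ0 T']
  have hγK : ∀ K : ℕ, K ≤ 2*T'+1 → 1/8 ≤ (1 - 1/(2*((T' : ℕ):ℝ)))^K := by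
    intro K hK
    have hb1 : (1 - 1/(2*((T' : ℕ):ℝ)))^(2*T'+1) ≤ (1 - 1/(2*((T' : ℕ):ℝ)))^K :=
      pow_le_pow_of_le_one hγ0 hγ1 hK
    have hb2 : (1 - 1/(2*((T' : ℕ):ℝ)))^(2*T'+1)
        = (1 - 1/(2*((T' : ℕ):ℝ)))^T' * (1 - 1/(2*((T' : ℕ):ℝ)))^T'
          * (1 - 1/(2*((T' : ℕ):ℝ))) := by
      rw [show 2*T'+1 = T' + (T' + 1) from by ring, pow_add, pow_succ]
      ring
    nlinarith [hγTlow, hγhalf]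
  exact ⟨_, hγhalf, hγ0, hγ1, hγTlow, hγThigh, hγK⟩

end Stmt8Aux


open Stmt8Aux

set_option maxHeartbeats 4000000

theorem stmt8 {S A : Type} [Fintype S] [DecidableEq S] [DecidableEq A]
    (μ : S → ℝ) (P : S → A → S → ℝ) (H : ℕ)
    (hμ0 : ∀ s, 0 ≤ μ s) (hμ1 : ∑ s, μ s = 1)
    (hP0 : ∀ s a s', 0 ≤ P s a s') (hP1 : ∀ s a, ∑ s', P s a s' = 1)
    (z : S × A)
    (hμz : ∀ s, μ s = if s = z.1 then 1 else 0)
    (hH : 2 * Real.log (8 * (Fintype.card S : ℝ) ^ (4 * Fintype.card S)) ≤ (H : ℝ))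
    (ε : ℝ) (hε0 : 0 < ε) (hε1 : ε ≤ 1)
    (f : ℕ) (hf : f ≤ H)
    (π' : ℕ → S → A)
    (hq : (f : ℝ) ≤ quantNS μ P π' H (fun g => (nVisits π' H z g : ℝ)) ε) :
    ∃ π : S → A,
      (⌊(1 / (2048 * (Fintype.card S : ℝ) ^ (12 * Fintype.card S))) * ε * f⌋₊ : ℝ) ≤
        quantNS μ P (fun _ => π) H
          (fun g => (nVisits (fun _ => π) (H / 2) z g : ℝ)) (1 / 2) := by
  classical
  -- mass of the path measure
  have hmass : ∀ ρ : ℕ → S → A, (∑ T : Fin (H+1) → S, trajP μ P ρ H (extT H T)) = 1 := by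
    intro ρ
    rw [Finset.sum_congr rfl (fun T _ => trajP_eq μ P ρ H (extT H T)),
      sum_prodP P hP1 ρ H 0 μ, hμ1]
  -- the goal quantile set is bounded above
  have hbdd : ∀ π0 : S → A, BddAbove {x : ℝ | 1/2 ≤ ∑ T : Fin (H+1) → S,
      if x ≤ (nVisits (fun _ => π0) (H/2) z (extT H T) : ℝ)
        then trajP μ P (fun _ => π0) H (extT H T) else 0} := by
    intro π0
    refine ⟨(H:ℝ), fun x hx => ?_⟩
    rw [Set.mem_setOf_eq] at hx
    by_contra hxH
    push_neg at hxH
    have hzero : (∑ T : Fin (H+1) → S,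
        if x ≤ (nVisits (fun _ => π0) (H/2) z (extT H T):ℝ)
          then trajP μ P (fun _ => π0) H (extT H T) else 0) = 0 := by
      refine Finset.sum_eq_zero fun T _ => ?_
      rw [if_neg]
      intro hc
      have h2 : nVisits (fun _ => π0) (H/2) z (extT H T) ≤ H :=
        le_trans (nVisits_le _ _ _ _) (Nat.div_le_self H 2)
      have h1 : (nVisits (fun _ => π0) (H/2) z (extT H T) : ℝ) ≤ (H:ℝ) := by exact_mod_cast h2
      linarith
    rw [hzero] at hx
    linarith
  set n := Fintype.card S with hn
  have hcard : n = Fintype.card S := hn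
  set m : ℕ := ⌊(1 / (2048 * (n : ℝ) ^ (12 * n))) * ε * f⌋₊ with hmdef
  have hmdef' : m = ⌊(1 / (2048 * (n : ℝ) ^ (12 * n))) * ε * f⌋₊ := hmdef
  clear_value m
  clear_value n
  have hquantG : ∀ π0 : S → A, quantNS μ P (fun _ => π0) H
      (fun g => (nVisits (fun _ => π0) (H / 2) z g : ℝ)) (1/2)
      = sSup {x : ℝ | 1/2 ≤ ∑ T : Fin (H+1) → S,
        if x ≤ (nVisits (fun _ => π0) (H/2) z (extT H T) : ℝ)
          then trajP μ P (fun _ => π0) H (extT H T) else 0} := fun _ => rfl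
  rcases Nat.eq_zero_or_pos m with hm0 | hm1
  · -- trivial case m = 0
    refine ⟨fun s => π' 0 s, ?_⟩
    rw [hquantG, hm0]
    refine le_csSup (hbdd _) ?_
    rw [Set.mem_setOf_eq]
    have hall : (∑ T : Fin (H+1) → S,
        if ((0:ℕ):ℝ) ≤ (nVisits (fun _ => (fun s => π' 0 s)) (H/2) z (extT H T):ℝ)
          then trajP μ P (fun _ => (fun s => π' 0 s)) H (extT H T) else 0)
        = ∑ T : Fin (H+1) → S, trajP μ P (fun _ => (fun s => π' 0 s)) H (extT H T) :=
      Finset.sum_congr rfl fun T _ => if_pos (by exact_mod_cast Nat.zero_le _)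
    rw [hall, hmass]
    norm_num
  · -- main case m ≥ 1
    -- basic numeric facts
    have hSne : Nonempty S := by
      by_contra hno
      rw [not_nonempty_iff] at hno
      rw [Finset.univ_eq_empty, Finset.sum_empty] at hμ1
      norm_num at hμ1
    have hcard1 : 1 ≤ n := by rw [hcard]; exact Fintype.card_pos
    obtain ⟨p, hpdef⟩ : ∃ p : ℝ, p = (n : ℝ) ^ (12 * n) := ⟨_, rfl⟩
    rw [← hpdef] at hmdef'
    have hppos : (0:ℝ) < p := by rw [hpdef]; positivity
    have hpow1 : (1:ℝ) ≤ p := by rw [hpdef]; exact one_le_pow₀ (by exact_mod_cast hcard1)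
    have hfR0 : (0:ℝ) ≤ (f:ℝ) := Nat.cast_nonneg f
    have hd0 : (0:ℝ) ≤ 1 / (2048 * p) := by
      apply le_of_lt
      apply div_pos one_pos
      linarith only [hppos]
    have hmle : (m:ℝ) ≤ (1 / (2048 * p)) * ε * f := by
      rw [hmdef']
      exact Nat.floor_le (mul_nonneg (mul_nonneg hd0 (le_of_lt hε0)) hfR0)
    have h1le : (1:ℝ) ≤ (1 / (2048 * p)) * ε * f := by
      have : (1:ℝ) ≤ (m:ℝ) := by exact_mod_cast hm1
      linarith only [this, hmle]
    have hscale : ((1 / (2048 * p)) * ε * f) * (2048 * p) = ε * f := by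
      field_simp
    have h2048p : (0:ℝ) < 2048 * p := by linarith only [hppos]
    have hεfp : 2048 * p ≤ ε * f := by
      have h := mul_le_mul_of_nonneg_right h1le (le_of_lt h2048p)
      rw [hscale] at h
      linarith only [h]
    have hεf : (2048:ℝ) ≤ ε * f := by nlinarith [hεfp, hpow1, hppos]
    have hmεf : (m:ℝ) * 2048 ≤ ε * f := by
      have h2 := mul_le_mul_of_nonneg_right hmle (le_of_lt h2048p)
      rw [hscale] at h2
      have hmp : (m:ℝ) ≤ (m:ℝ) * p := le_mul_of_one_le_right (Nat.cast_nonneg m) hpow1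
      nlinarith [h2, hmp]
    have hfR : (2048:ℝ) ≤ (f:ℝ) := by nlinarith [hεf, hε1, hfR0]
    have hfN : 2048 ≤ f := by exact_mod_cast hfR
    have hHN : 2048 ≤ H := le_trans hfN hf
    have hT'1 : 1 ≤ H/2 := by omega
    have hT'H : H/2 ≤ H := by omega
    have hH2T : H ≤ 2*(H/2) + 1 := by omega
    obtain ⟨γ, hγhalf, hγ0, hγ1, hγTlow, hγThigh, hγKfun⟩ := gamma_facts (H/2) hT'1
    have hγH : (1/8:ℝ) ≤ γ^H := hγKfun H hH2T
    -- restricted action set and value iteration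
    obtain ⟨A₀, hA₀def⟩ : ∃ A₀ : Finset A, A₀ = insert z.2
      ((Finset.range H ×ˢ (Finset.univ : Finset S)).image fun pr => π' pr.1 pr.2) := ⟨_, rfl⟩
    have hA : A₀.Nonempty := ⟨z.2, by rw [hA₀def]; exact Finset.mem_insert_self _ _⟩
    have hmem : ∀ t s, t < H → π' t s ∈ A₀ := fun t s ht => by
      rw [hA₀def]
      exact Finset.mem_insert_of_mem (Finset.mem_image.2
        ⟨(t, s), Finset.mem_product.2 ⟨Finset.mem_range.2 ht, Finset.mem_univ _⟩, rfl⟩)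
    -- greedy policy w.r.t. uval H
    have hgreedyEx : ∀ s : S, ∃ a ∈ A₀, uval P z γ A₀ hA (H+1) s
        = (if (s, a) = z then (1:ℝ) else 0) + γ * ∑ y, P s a y * uval P z γ A₀ hA H y := by
      intro s
      obtain ⟨a, haA, hae⟩ := Finset.exists_mem_eq_sup' hA (fun a =>
        (if (s, a) = z then (1:ℝ) else 0) + γ * ∑ y, P s a y * uval P z γ A₀ hA H y)
      exact ⟨a, haA, by rw [uval]; exact hae⟩
    choose π hπA hπeq using hgreedyEx
    refine ⟨π, ?_⟩
    -- extract from hq : probability of at least f visits is ≥ ε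
    have hquantq : quantNS μ P π' H (fun g => (nVisits π' H z g : ℝ)) ε
        = sSup {x : ℝ | ε ≤ ∑ T : Fin (H+1) → S,
            if x ≤ (nVisits π' H z (extT H T) : ℝ)
              then trajP μ P π' H (extT H T) else 0} := rfl
    rw [hquantq] at hq
    have hne : {x : ℝ | ε ≤ ∑ T : Fin (H+1) → S,
        if x ≤ (nVisits π' H z (extT H T) : ℝ)
          then trajP μ P π' H (extT H T) else 0}.Nonempty := by
      by_contra hno
      rw [Set.not_nonempty_iff_eq_empty] at hno
      rw [hno, Real.sSup_empty] at hq
      linarith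
    obtain ⟨x₀, hx₀mem, hx₀gt⟩ := exists_lt_of_lt_csSup hne
      (show (f:ℝ) - 1/2 < _ from by linarith)
    rw [Set.mem_setOf_eq] at hx₀mem
    -- expected visits is at least ε f
    have hEN : ε * f ≤ ∑ T : Fin (H+1) → S,
        trajP μ P π' H (extT H T) * (nVisits π' H z (extT H T) : ℝ) := by
      have step : ∀ T : Fin (H+1) → S,
          (if x₀ ≤ (nVisits π' H z (extT H T):ℝ) then trajP μ P π' H (extT H T) else 0) * f
          ≤ trajP μ P π' H (extT H T) * (nVisits π' H z (extT H T) : ℝ) := by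
        intro T
        have hp := trajP_nonneg hμ0 hP0 π' H (extT H T)
        by_cases hc : x₀ ≤ (nVisits π' H z (extT H T):ℝ)
        · rw [if_pos hc]
          have h1 : (f:ℝ) - 1/2 < (nVisits π' H z (extT H T):ℝ) := lt_of_lt_of_le hx₀gt hc
          have h2 : f < nVisits π' H z (extT H T) + 1 := by
            exact_mod_cast (show (f:ℝ) < (nVisits π' H z (extT H T):ℝ) + 1 by linarith)
          have h3 : (f:ℝ) ≤ (nVisits π' H z (extT H T):ℝ) := by
            exact_mod_cast Nat.lt_succ_iff.mp h2
          exact mul_le_mul_of_nonneg_left h3 hp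
        · rw [if_neg hc, zero_mul]
          exact mul_nonneg hp (Nat.cast_nonneg _)
      calc ε * f ≤ (∑ T : Fin (H+1) → S,
            if x₀ ≤ (nVisits π' H z (extT H T):ℝ)
              then trajP μ P π' H (extT H T) else 0) * f :=
            mul_le_mul_of_nonneg_right hx₀mem hfR0
        _ = ∑ T : Fin (H+1) → S, (if x₀ ≤ (nVisits π' H z (extT H T):ℝ)
              then trajP μ P π' H (extT H T) else 0) * f := Finset.sum_mul _ _ _
        _ ≤ _ := Finset.sum_le_sum fun T _ => step T
    -- pass to the discounted value of π'
    have hwchain : γ^H * (ε * f) ≤ wval P π' z γ H 0 z.1 := by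
      have hstep1 : γ^H * (ε * f) ≤ γ^H * ∑ T : Fin (H+1) → S,
          trajP μ P π' H (extT H T) * (nVisits π' H z (extT H T) : ℝ) :=
        mul_le_mul_of_nonneg_left hEN (pow_nonneg hγ0 H)
      have hstep2 : γ^H * (∑ T : Fin (H+1) → S,
          trajP μ P π' H (extT H T) * (nVisits π' H z (extT H T) : ℝ))
          ≤ ∑ T : Fin (H+1) → S, μ (extT H T 0) * prodP P π' 0 H (extT H T)
              * dsum π' z γ 0 H (extT H T) := by
        rw [Finset.mul_sum]
        refine Finset.sum_le_sum fun T _ => ?_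
        have hp := trajP_nonneg hμ0 hP0 π' H (extT H T)
        have hd := dsum_ge (π' := π') (z := z) hγ0 hγ1 H (extT H T)
        calc γ^H * (trajP μ P π' H (extT H T) * (nVisits π' H z (extT H T) : ℝ))
            = trajP μ P π' H (extT H T) * (γ^H * (nVisits π' H z (extT H T) : ℝ)) := by ring
          _ ≤ trajP μ P π' H (extT H T) * dsum π' z γ 0 H (extT H T) :=
              mul_le_mul_of_nonneg_left hd hp
          _ = μ (extT H T 0) * prodP P π' 0 H (extT H T) * dsum π' z γ 0 H (extT H T) := by
              rw [trajP_eq]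
      have hstep3 : (∑ T : Fin (H+1) → S, μ (extT H T 0) * prodP P π' 0 H (extT H T)
          * dsum π' z γ 0 H (extT H T)) = wval P π' z γ H 0 z.1 := by
        rw [sum_wval hP1 π' γ H 0 μ]
        rw [Finset.sum_congr rfl (fun x _ => by rw [hμz x, ite_mul, one_mul, zero_mul])]
        rw [Finset.sum_ite_eq' Finset.univ z.1 (fun x => wval P π' z γ H 0 x),
          if_pos (Finset.mem_univ _)]
      linarith
    have huval : γ^H * (ε * f) ≤ uval P z γ A₀ hA H z.1 :=
      le_trans hwchain (wval_le_uval hA hP0 hγ0 hmem H 0 z.1 (by omega))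
    have huval0 : (0:ℝ) ≤ uval P z γ A₀ hA H z.1 := uval_nonneg hA hP0 hγ0 _ _
    -- expected visits of the greedy stationary policy
    have hEVlow : (1/24:ℝ) * (ε * f) ≤ EV P π z (H/2) z.1 := by
      have h1 := dvv_le_EV (π := π) (z := z) hP0 hγ0 hγ1 (H/2) z.1
      have h2 := dvv_ge_greedy hA hP0 hP1 hγ0 hγ1 H hπeq (H/2) z.1
      have h3 : γ^(H/2) * uval P z γ A₀ hA H z.1 ≤ (2/3) * uval P z γ A₀ hA H z.1 :=
        mul_le_mul_of_nonneg_right hγThigh huval0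
      have hεf0 : (0:ℝ) ≤ ε * f := by nlinarith [hεf]
      have h4 : (1/8) * (ε*f) ≤ γ^H * (ε*f) :=
        mul_le_mul_of_nonneg_right hγH hεf0
      linarith only [h1, h2, h3, h4, huval]
    -- median bound
    have hq0 : 0 ≤ B P π z (H/2) z.1 m := B_nonneg hP0 _ _ _
    have hqhalf : (1/2:ℝ) ≤ B P π z (H/2) z.1 m := by
      by_contra hqc
      push_neg at hqc
      have hup : EV P π z (H/2) z.1 ≤ 2*m := by
        rw [EV_eq_sum_B hP0 hP1]
        have c1 : (∑ j ∈ Finset.range (H/2), B P π z (H/2) z.1 (j+1))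
            ≤ ∑ j ∈ Finset.range (H/2), (B P π z (H/2) z.1 m)^(j/m) := by
          refine Finset.sum_le_sum fun j _ => ?_
          have h1a : m * (j/m) ≤ j := by
            rw [mul_comm]
            exact Nat.div_mul_le_self j m
          have h1 : m * (j/m) ≤ j + 1 := by omega
          calc B P π z (H/2) z.1 (j+1) ≤ B P π z (H/2) z.1 (m*(j/m)) :=
                B_anti hP0 hP1 _ _ _ _ h1
            _ ≤ (B P π z (H/2) z.1 m)^(j/m) := B_pow hP0 hP1 (H/2) m hm1 (j/m)
        have c2 : (∑ j ∈ Finset.range (H/2), (B P π z (H/2) z.1 m)^(j/m))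
            ≤ ∑ j ∈ Finset.range (m*(H/2)), (B P π z (H/2) z.1 m)^(j/m) :=
          Finset.sum_le_sum_of_subset_of_nonneg
            (Finset.range_subset_range.2 (Nat.le_mul_of_pos_left _ hm1))
            (fun j _ _ => pow_nonneg hq0 _)
        have c3 : (∑ j ∈ Finset.range (m*(H/2)), (B P π z (H/2) z.1 m)^(j/m))
            = m * ∑ i ∈ Finset.range (H/2), (B P π z (H/2) z.1 m)^i :=
          sum_pow_div_eq _ m hm1 (H/2)
        have c4 : (∑ i ∈ Finset.range (H/2), (B P π z (H/2) z.1 m)^i) ≤ 2 :=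
          geom_le_two hq0 (le_of_lt (by linarith)) (H/2)
        have c5 : (m:ℝ) * ∑ i ∈ Finset.range (H/2), (B P π z (H/2) z.1 m)^i ≤ m * 2 :=
          mul_le_mul_of_nonneg_left c4 (Nat.cast_nonneg _)
        calc (∑ j ∈ Finset.range (H/2), B P π z (H/2) z.1 (j+1))
            ≤ m * ∑ i ∈ Finset.range (H/2), (B P π z (H/2) z.1 m)^i := by
              rw [← c3]; exact le_trans c1 c2
          _ ≤ m * 2 := c5
          _ = 2*m := by ring
      linarith only [hEVlow, hup, hmεf, hεf]
    -- conclude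
    rw [hquantG]
    refine le_csSup (hbdd π) ?_
    rw [Set.mem_setOf_eq]
    have htrans : (∑ T : Fin (H+1) → S,
        if (m:ℝ) ≤ (nVisits (fun _ => π) (H/2) z (extT H T):ℝ)
          then trajP μ P (fun _ => π) H (extT H T) else 0)
        = ∑ x, μ x * Bt P π z (H/2) H 0 x m := by
      rw [← sum_Bt (z := z) hP1 π (H/2) H 0 μ m]
      refine Finset.sum_congr rfl fun T _ => ?_
      rw [trajP_eq]
      have hc : ((m:ℝ) ≤ (nVisits (fun _ => π) (H/2) z (extT H T):ℝ))
          ↔ (m ≤ cntv π z (H/2) 0 H (extT H T)) := by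
        rw [Nat.cast_le, nVisits_eq_cntv π z (H/2) H (extT H T) hT'H]
      rw [if_congr hc rfl rfl, mul_ite, mul_one, mul_zero]
    rw [htrans]
    rw [Finset.sum_congr rfl (fun x _ => by rw [hμz x, ite_mul, one_mul, zero_mul]),
      Finset.sum_ite_eq' Finset.univ z.1 (fun x => Bt P π z (H/2) H 0 x m),
      if_pos (Finset.mem_univ _)]
    rw [Bt_eq_B H 0 z.1 m (by omega) (by omega)]
    rw [show H/2 - 0 = H/2 from by omega]
    exact hqhalf

end Stmt8AuxSection
end

section
/- Let M = (S, A, P, R, H, μ) be a finite MDP satisfying the bounded total reward assumption, with H ≥ |S|. For any (s, a) ∈ S × A, if there exists a (possibly non-stationary) deterministic policy π such that, for the random trajectory (s_0, a_0, r_0), …, (s_{H−1}, a_{H−1}, r_{H−1}), s_H induced by executing π in M, Pr[Σ_{h=0}^{H−1} 1[(s_h, a_h) = (s, a)] > 1] ≥ ε for some ε > 0, then the reward R(s, a) is at most 2|S|/H almost surely, and consequently E[(R(s, a))²] ≤ 4|S|²/H². -/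
open Finset MeasureTheory

/-- Any positive-probability path can be shortened to one of length at most `|S|`,
preserving the endpoints and the first action. -/
lemma shorten_path {S A : Type} [Fintype S] (P : S → A → S → ℝ) :
    ∀ n (g : ℕ → S) (ac : ℕ → A), (∀ i, i < n → 0 < P (g i) (ac i) (g (i+1))) →
    ∃ m : ℕ, ∃ g' : ℕ → S, ∃ ac' : ℕ → A, m ≤ n ∧ m ≤ Fintype.card S ∧ (1 ≤ n → 1 ≤ m) ∧
      g' 0 = g 0 ∧ g' m = g n ∧ ac' 0 = ac 0 ∧ ∀ i, i < m → 0 < P (g' i) (ac' i) (g' (i+1)) := by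
  intro n
  induction n using Nat.strong_induction_on with
  | _ n IH =>
    intro g ac hstep
    by_cases hn : n ≤ Fintype.card S
    · exact ⟨n, g, ac, le_rfl, hn, fun h => h, rfl, rfl, rfl, hstep⟩
    · push_neg at hn
      obtain ⟨k1, k2, hne, heq⟩ := Fintype.exists_ne_map_eq_of_card_lt
        (fun k : Fin (Fintype.card S + 1) => g ((k : ℕ) + 1)) (by simp)
      obtain ⟨i, j, h1i, hij, hjn, hgij⟩ :
          ∃ i j : ℕ, 1 ≤ i ∧ i < j ∧ j ≤ n ∧ g i = g j := by
        rcases lt_or_gt_of_ne hne with h | h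
        · exact ⟨(k1:ℕ)+1, (k2:ℕ)+1, by omega, by simpa using h,
            by have := k2.isLt; omega, heq⟩
        · exact ⟨(k2:ℕ)+1, (k1:ℕ)+1, by omega, by simpa using h,
            by have := k1.isLt; omega, heq.symm⟩
      set d := j - i with hd
      have hd1 : 1 ≤ d := by omega
      set g' : ℕ → S := fun k => if k < i then g k else g (k + d) with hg'
      set ac' : ℕ → A := fun k => if k < i then ac k else ac (k + d) with hac'
      have hstep' : ∀ k, k < n - d → 0 < P (g' k) (ac' k) (g' (k+1)) := by
        intro k hk
        by_cases hki : k < i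
        · have hgk1 : g' (k+1) = g (k+1) := by
            by_cases h2 : k + 1 < i
            · simp only [hg', if_pos h2]
            · have hki1 : k + 1 = i := by omega
              simp only [hg', if_neg h2]
              have e : k + 1 + d = j := by omega
              rw [e, ← hgij, hki1]
          have hgk : g' k = g k := by simp only [hg', if_pos hki]
          have hack : ac' k = ac k := by simp only [hac', if_pos hki]
          rw [hgk, hack, hgk1]
          exact hstep k (by omega)
        · have h2 : ¬ (k + 1 < i) := by omega
          simp only [hg', hac', if_neg hki, if_neg h2]
          have e : k + 1 + d = (k + d) + 1 := by omega
          rw [e]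
          exact hstep (k + d) (by omega)
      obtain ⟨m, g'', ac'', hm1, hm2, hm3, h0, hend, hac0, hsteps⟩ :=
        IH (n - d) (by omega) g' ac' hstep'
      refine ⟨m, g'', ac'', by omega, hm2, fun _ => hm3 (by omega), ?_, ?_, ?_, hsteps⟩
      · rw [h0]; simp only [hg', if_pos (show 0 < i by omega)]
      · rw [hend]; simp only [hg', if_neg (show ¬ (n - d < i) by omega)]
        congr 1; omega
      · rw [hac0]; simp only [hac', if_pos (show 0 < i by omega)]

/-- Measure of a cylinder set under a product of probability measures. -/
lemma pi_cyl {H : ℕ} (μs : Fin H → Measure ℝ) [h : ∀ i, IsProbabilityMeasure (μs i)]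
    (V : Finset (Fin H)) (B : Set ℝ) :
    Measure.pi μs {f | ∀ j ∈ V, f j ∈ B} = ∏ j ∈ V, μs j B := by
  have hset : {f : Fin H → ℝ | ∀ j ∈ V, f j ∈ B} =
      Set.pi Set.univ (fun j => if j ∈ V then B else Set.univ) := by
    ext f
    simp only [Set.mem_setOf_eq, Set.mem_pi, Set.mem_univ, forall_true_left]
    constructor
    · intro hfor j; by_cases hj : j ∈ V <;> simp [hj, hfor]
    · intro hfor j hj; have := hfor j; rwa [if_pos hj] at this
  rw [hset, Measure.pi_pi]
  have : ∀ j ∈ Finset.univ, μs j (if j ∈ V then B else Set.univ) =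
      (if j ∈ V then μs j B else 1) := by
    intro j _; split <;> simp
  rw [Finset.prod_congr rfl this, Finset.prod_ite_mem, Finset.univ_inter]

theorem stmt9 {S A : Type} [Fintype S] [DecidableEq S] [DecidableEq A]
    (μ : S → ℝ) (P : S → A → S → ℝ) (R : S → A → Measure ℝ)
    [∀ s a, IsProbabilityMeasure (R s a)]
    (H : ℕ)
    (hμ0 : ∀ s, 0 ≤ μ s) (hμ1 : ∑ s, μ s = 1)
    (hP0 : ∀ s a s', 0 ≤ P s a s') (hP1 : ∀ s a, ∑ s', P s a s' = 1)
    (hH : Fintype.card S ≤ H)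
    -- bounded total reward assumption: along any trajectory of positive probability induced by
    -- any policy, the rewards lie in [0,1] and their sum is at most 1, almost surely
    (hBTR : ∀ (π' : ℕ → S → A) (T : Fin (H + 1) → S), 0 < trajP μ P π' H (extT H T) →
      ∀ᵐ rew ∂(Measure.pi fun h : Fin H =>
          R (extT H T (h : ℕ)) (π' (h : ℕ) (extT H T (h : ℕ)))),
        (∀ h : Fin H, rew h ∈ Set.Icc (0 : ℝ) 1) ∧ (∑ h : Fin H, rew h) ≤ 1)
    (s : S) (a : A) (ε : ℝ) (hε : 0 < ε)
    (π : ℕ → S → A)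
    -- the policy π visits (s, a) more than once with probability at least ε
    (hvis : ε ≤ ∑ T : Fin (H + 1) → S,
      if 1 < nVisits π H (s, a) (extT H T) then trajP μ P π H (extT H T) else 0) :
    (∀ᵐ x ∂(R s a), x ≤ 2 * (Fintype.card S : ℝ) / H) ∧
      ∫ x, x ^ 2 ∂(R s a) ≤ 4 * (Fintype.card S : ℝ) ^ 2 / (H : ℝ) ^ 2 := by
  classical
  have hSpos : 0 < Fintype.card S := by
    rcases isEmpty_or_nonempty S with h | h
    · exfalso; rw [Finset.univ_eq_empty, Finset.sum_empty] at hμ1; norm_num at hμ1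
    · exact Fintype.card_pos
  have hHpos : 0 < H := lt_of_lt_of_le hSpos hH
  -- extract a trajectory visiting (s,a) at least twice with positive probability
  obtain ⟨T0, hvis2, htraj⟩ :
      ∃ T : Fin (H+1) → S, 1 < nVisits π H (s,a) (extT H T) ∧ 0 < trajP μ P π H (extT H T) := by
    by_contra hcon
    push_neg at hcon
    have hle : (∑ T : Fin (H + 1) → S,
        if 1 < nVisits π H (s, a) (extT H T) then trajP μ P π H (extT H T) else 0) ≤ 0 := by
      apply Finset.sum_nonpos
      intro T _
      split
      · exact hcon T ‹_›
      · exact le_rfl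
    linarith
  set f := extT H T0 with hf
  have hfac : 0 < μ (f 0) ∧ 0 < ∏ h ∈ Finset.range H, P (f h) (π h (f h)) (f (h+1)) := by
    rcases mul_pos_iff.mp htraj with h | h
    · exact h
    · exact absurd h.1 (not_lt.mpr (hμ0 _))
  have hμf : 0 < μ (f 0) := hfac.1
  have hPf : ∀ h, h < H → 0 < P (f h) (π h (f h)) (f (h+1)) := by
    intro h hh
    rcases (hP0 (f h) (π h (f h)) (f (h+1))).lt_or_eq with h' | h'
    · exact h'
    · exfalso
      have hz : (∏ h ∈ Finset.range H, P (f h) (π h (f h)) (f (h+1))) = 0 :=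
        Finset.prod_eq_zero (Finset.mem_range.mpr hh) h'.symm
      rw [hz] at hfac; exact lt_irrefl 0 hfac.2
  -- two visit times
  obtain ⟨h1, h2, hlt12, hh2H, hp1, hp2⟩ :
      ∃ h1 h2, h1 < h2 ∧ h2 < H ∧ (f h1, π h1 (f h1)) = (s, a) ∧ (f h2, π h2 (f h2)) = (s, a) := by
    have hcard : nVisits π H (s,a) f = ((Finset.range H).filter
        (fun h => (f h, π h (f h)) = (s,a))).card := by
      rw [Finset.card_filter]; rfl
    rw [hcard] at hvis2
    obtain ⟨x, hx, y, hy, hxy⟩ := Finset.one_lt_card.mp hvis2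
    simp only [Finset.mem_filter, Finset.mem_range] at hx hy
    rcases lt_or_gt_of_ne hxy with h | h
    · exact ⟨x, y, h, hy.1, hx.2, hy.2⟩
    · exact ⟨y, x, h, hx.1, hy.2, hx.2⟩
  have hfs1 : f h1 = s := congrArg Prod.fst hp1
  have hfa1 : π h1 (f h1) = a := congrArg Prod.snd hp1
  have hfs2 : f h2 = s := congrArg Prod.fst hp2
  -- shorten prefix and cycle
  obtain ⟨p, pre, pact, hpn, hpcS, _, hpre0, hprend, _, hpresteps⟩ :=
    shorten_path P h1 f (fun h => π h (f h)) (fun i hi => hPf i (by omega))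
  obtain ⟨L, cyc, cact, hLn, hLcS, hL1', hcyc0, hcycL, hcact0, hcycsteps⟩ :=
    shorten_path P (h2 - h1) (fun i => f (h1 + i)) (fun i => π (h1 + i) (f (h1 + i)))
      (fun i hi => hPf (h1 + i) (by omega))
  have hLpos : 1 ≤ L := hL1' (by omega)
  have hcyc0' : cyc 0 = s := by
    have h := hcyc0; simp only [Nat.add_zero] at h; rw [h]; exact hfs1
  have hcycL' : cyc L = s := by
    have h := hcycL
    rw [show h1 + (h2 - h1) = h2 from by omega] at h
    rw [h]; exact hfs2
  have hcact0' : cact 0 = a := by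
    have h := hcact0; simp only [Nat.add_zero] at h; rw [h]; exact hfa1
  -- the looping trajectory and policy
  set F : ℕ → S := fun n => if n < p then pre n else cyc ((n - p) % L) with hF
  set AC : ℕ → A := fun n => if n < p then pact n else cact ((n - p) % L) with hAC
  set π' : ℕ → S → A := fun h _ => AC h with hπ'
  set T : Fin (H+1) → S := fun i => F (i : ℕ) with hT
  have hext : ∀ n, n ≤ H → extT H T n = F n := by
    intro n hn
    simp [extT, hT, min_eq_left hn]
  have hstepF : ∀ h, 0 < P (F h) (AC h) (F (h+1)) := by
    intro h
    by_cases hhp : h < p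
    · have hFh : F h = pre h := by simp only [hF, if_pos hhp]
      have hACh : AC h = pact h := by simp only [hAC, if_pos hhp]
      by_cases h2' : h + 1 < p
      · have hF1 : F (h+1) = pre (h+1) := by simp only [hF, if_pos h2']
        rw [hFh, hACh, hF1]; exact hpresteps h (by omega)
      · have hhp1 : h + 1 = p := by omega
        have hF1 : F (h+1) = s := by
          simp only [hF, if_neg h2', hhp1, Nat.sub_self, Nat.zero_mod, hcyc0',
            lt_self_iff_false, if_false]
        rw [hFh, hACh, hF1, ← hfs1, ← hprend, ← hhp1]
        exact hpresteps h (by omega)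
    · have hh1 : ¬ (h + 1 < p) := by omega
      have hFh : F h = cyc ((h - p) % L) := by simp only [hF, if_neg hhp]
      have hACh : AC h = cact ((h - p) % L) := by simp only [hAC, if_neg hhp]
      have hF1 : F (h+1) = cyc ((h + 1 - p) % L) := by simp only [hF, if_neg hh1]
      set r := (h - p) % L with hr
      have hrL : r < L := Nat.mod_lt _ (by omega)
      have hnext : (h + 1 - p) % L = (r + 1) % L := by
        rw [show h + 1 - p = (h - p) + 1 from by omega, hr]
        exact (Nat.mod_add_mod (h - p) L 1).symm
      rw [hFh, hACh, hF1, hnext]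
      by_cases hrl : r + 1 = L
      · rw [hrl, Nat.mod_self, hcyc0', ← hcycL', ← hrl]
        exact hcycsteps r (by omega)
      · rw [Nat.mod_eq_of_lt (by omega : r + 1 < L)]
        exact hcycsteps r (by omega)
  have hFs : ∀ m, F (p + m * L) = s := by
    intro m
    have h1' : ¬ (p + m * L < p) := by omega
    simp only [hF, if_neg h1']
    rw [show p + m * L - p = m * L from by omega, Nat.mul_mod_left, hcyc0']
  have hACs : ∀ m, AC (p + m * L) = a := by
    intro m
    have h1' : ¬ (p + m * L < p) := by omega
    simp only [hAC, if_neg h1']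
    rw [show p + m * L - p = m * L from by omega, Nat.mul_mod_left, hcact0']
  have hF0 : F 0 = f 0 := by
    by_cases hp0 : 0 < p
    · simp only [hF, if_pos hp0]; exact hpre0
    · have hp0' : p = 0 := by omega
      have h1' : f 0 = s := by
        rw [← hpre0, show (0:ℕ) = p from hp0'.symm, hprend, hfs1]
      simp only [hF, if_neg (show ¬ (0:ℕ) < p by omega), Nat.zero_sub, Nat.zero_mod,
        hcyc0', h1']
  have htrajF : 0 < trajP μ P π' H (extT H T) := by
    have e0 : extT H T 0 = F 0 := hext 0 (by omega)
    have eprod : ∏ h ∈ Finset.range H, P (extT H T h) (π' h (extT H T h)) (extT H T (h+1))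
        = ∏ h ∈ Finset.range H, P (F h) (AC h) (F (h+1)) := by
      apply Finset.prod_congr rfl
      intro h hh
      rw [Finset.mem_range] at hh
      rw [hext h (by omega), hext (h+1) (by omega)]
    unfold trajP
    rw [e0, eprod, hF0]
    exact mul_pos hμf (Finset.prod_pos fun i _ => hstepF i)
  -- the product measure of rewards
  set μs : Fin H → Measure ℝ :=
    fun h : Fin H => R (extT H T (h:ℕ)) (π' (h:ℕ) (extT H T (h:ℕ))) with hμs
  haveI hμsP : ∀ i, IsProbabilityMeasure (μs i) := fun i => by
    rw [hμs]; infer_instance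
  have hae : ∀ᵐ rew ∂(Measure.pi μs),
      (∀ h : Fin H, rew h ∈ Set.Icc (0:ℝ) 1) ∧ (∑ h : Fin H, rew h) ≤ 1 := hBTR π' T htrajF
  have hGnull : Measure.pi μs {rew | ¬ ((∀ h : Fin H, rew h ∈ Set.Icc (0:ℝ) 1) ∧
      (∑ h : Fin H, rew h) ≤ 1)} = 0 := ae_iff.mp hae
  -- visit times
  set K := (H - 1 - p) / L + 1 with hK
  obtain ⟨q, hq⟩ : ∃ q, q = (H - 1 - p) / L := ⟨_, rfl⟩
  have hK' : K = q + 1 := by rw [hK, hq]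
  have hKpos : 0 < K := by omega
  have hpH : p + 1 < H := by omega
  have htlt : ∀ m, m < K → p + m * L < H := by
    intro m hm
    have hm' : m ≤ q := by omega
    have hmL : m * L ≤ H - 1 - p :=
      le_trans (Nat.mul_le_mul_right L hm')
        (by rw [hq]; exact Nat.div_mul_le_self _ _)
    exact lt_of_le_of_lt (Nat.add_le_add_left hmL p) (by omega)
  have hinj : Function.Injective (fun m : Fin K => (⟨p + m * L, htlt m m.2⟩ : Fin H)) := by
    intro m1 m2 hmm
    have h1' : p + (m1:ℕ) * L = p + (m2:ℕ) * L := congrArg Fin.val hmm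
    have h2' : (m1:ℕ) * L = (m2:ℕ) * L := by omega
    exact Fin.ext (Nat.eq_of_mul_eq_mul_right (by omega) h2')
  set V : Finset (Fin H) :=
    Finset.image (fun m : Fin K => (⟨p + m * L, htlt m m.2⟩ : Fin H)) Finset.univ with hV
  have hVcard : V.card = K := by
    rw [hV, Finset.card_image_of_injective _ hinj, Finset.card_univ, Fintype.card_fin]
  have hVne : V.Nonempty := by
    refine ⟨⟨p, by omega⟩, ?_⟩
    rw [hV]
    exact Finset.mem_image.mpr ⟨⟨0, hKpos⟩, Finset.mem_univ _, by simp⟩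
  have hμsV : ∀ j ∈ V, μs j = R s a := by
    intro j hj
    rw [hV, Finset.mem_image] at hj
    obtain ⟨m, _, hm⟩ := hj
    have hjval : (j : ℕ) = p + (m:ℕ) * L := by rw [← hm]
    simp only [hμs]
    rw [hext _ (Nat.le_of_lt j.isLt)]
    show R (F (j:ℕ)) (AC (j:ℕ)) = R s a
    rw [hjval, hFs, hACs]
  have hmarg : ∀ B : Set ℝ,
      Measure.pi μs {rew | ∀ j ∈ V, rew j ∈ B} = (R s a) B ^ K := by
    intro B
    rw [pi_cyl μs V B, Finset.prod_congr rfl (fun j hj => by rw [hμsV j hj]),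
      Finset.prod_const, hVcard]
  -- the key arithmetic bound
  set c : ℝ := 2 * (Fintype.card S : ℝ) / H with hc
  have hc0 : (0:ℝ) < (H:ℝ) := by exact_mod_cast hHpos
  have hKnat : H ≤ K * (2 * Fintype.card S) := by
    obtain ⟨x, hx⟩ : ∃ x, x = L * ((H - 1 - p) / L) := ⟨_, rfl⟩
    obtain ⟨y, hy⟩ : ∃ y, y = K * L := ⟨_, rfl⟩
    obtain ⟨z, hz⟩ : ∃ z, z = K * Fintype.card S := ⟨_, rfl⟩
    have h1' : x + (H - 1 - p) % L = H - 1 - p := by rw [hx]; exact Nat.div_add_mod _ _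
    have h2' : (H - 1 - p) % L < L := Nat.mod_lt _ (by omega)
    have h3' : y = x + L := by rw [hy, hx, hK]; ring
    have h4' : y ≤ z := by rw [hy, hz]; exact Nat.mul_le_mul_left K hLcS
    have h5' : Fintype.card S ≤ z := by
      rw [hz]; exact Nat.le_mul_of_pos_left _ hKpos
    have h6' : K * (2 * Fintype.card S) = z + z := by rw [hz]; ring
    rw [h6']
    omega
  have hKc : 1 ≤ (K:ℝ) * c := by
    have h1' : (H:ℝ) ≤ (K:ℝ) * (2 * (Fintype.card S:ℝ)) := by exact_mod_cast hKnat
    rw [hc, show (K:ℝ) * (2 * (Fintype.card S:ℝ) / (H:ℝ))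
        = ((K:ℝ) * (2 * (Fintype.card S:ℝ))) / (H:ℝ) from by ring,
      le_div_iff₀ hc0, one_mul]
    exact h1'
  -- R s a gives no mass outside [0,1]
  have hIccnull : (R s a) (Set.Icc (0:ℝ) 1)ᶜ = 0 := by
    have hsub : {rew : Fin H → ℝ | ∀ j ∈ V, rew j ∈ (Set.Icc (0:ℝ) 1)ᶜ} ⊆
        {rew | ¬ ((∀ h : Fin H, rew h ∈ Set.Icc (0:ℝ) 1) ∧ (∑ h : Fin H, rew h) ≤ 1)} := by
      intro rew hrew hG
      obtain ⟨j0, hj0⟩ := hVne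
      exact (hrew j0 hj0) (hG.1 j0)
    have h0' := le_antisymm (le_trans (measure_mono hsub) (le_of_eq hGnull)) zero_le
    rw [hmarg _] at h0'
    exact (pow_eq_zero_iff (show K ≠ 0 by omega)).mp h0'
  -- R s a gives no mass above c
  have hIoinull : (R s a) (Set.Ioi c) = 0 := by
    have hsub : {rew : Fin H → ℝ | ∀ j ∈ V, rew j ∈ Set.Ioi c} ⊆
        {rew | ¬ ((∀ h : Fin H, rew h ∈ Set.Icc (0:ℝ) 1) ∧ (∑ h : Fin H, rew h) ≤ 1)} := by
      intro rew hrew hG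
      obtain ⟨hIcc, hsum⟩ := hG
      have h1' : ∑ h ∈ V, c < ∑ h ∈ V, rew h :=
        Finset.sum_lt_sum_of_nonempty hVne (fun j hj => hrew j hj)
      have h2' : ∑ h ∈ V, rew h ≤ ∑ h : Fin H, rew h :=
        Finset.sum_le_sum_of_subset_of_nonneg (Finset.subset_univ V)
          (fun h _ _ => (hIcc h).1)
      rw [Finset.sum_const, hVcard, nsmul_eq_mul] at h1'
      linarith
    have h0' := le_antisymm (le_trans (measure_mono hsub) (le_of_eq hGnull)) zero_le
    rw [hmarg _] at h0'
    exact (pow_eq_zero_iff (show K ≠ 0 by omega)).mp h0'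
  have haeaux : ∀ᵐ x ∂(R s a), x ∈ Set.Icc (0:ℝ) 1 ∧ x ≤ c := by
    have h1' : ∀ᵐ x ∂(R s a), x ∈ Set.Icc (0:ℝ) 1 := by
      rw [ae_iff]; exact hIccnull
    have h2' : ∀ᵐ x ∂(R s a), x ≤ c := by
      rw [ae_iff]
      have he : {x : ℝ | ¬ x ≤ c} = Set.Ioi c := by
        ext x; simp [not_le, Set.mem_Ioi]
      rw [he]; exact hIoinull
    exact h1'.and h2'
  constructor
  · exact haeaux.mono (fun x hx => hx.2)
  · have hbound : ∀ᵐ x ∂(R s a), ‖x ^ 2‖ ≤ c ^ 2 := by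
      refine haeaux.mono (fun x hx => ?_)
      rw [Real.norm_eq_abs, abs_of_nonneg (by positivity)]
      exact pow_le_pow_left₀ hx.1.1 hx.2 2
    have hb := norm_integral_le_of_norm_le_const hbound
    rw [Measure.real, measure_univ, ENNReal.toReal_one, mul_one] at hb
    have h2' : ∫ x, x ^ 2 ∂(R s a) ≤ c ^ 2 :=
      le_trans (le_abs_self _) (by rwa [Real.norm_eq_abs] at hb)
    calc ∫ x, x ^ 2 ∂(R s a) ≤ c ^ 2 := h2'
      _ = 4 * (Fintype.card S:ℝ)^2 / (H:ℝ)^2 := by rw [hc]; ring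
end

section
/- Let m̄ ≥ 1 and n̄ ≥ n ≥ 1 be positive integers, and let ε ∈ [0, 1/(8n̄)] be a real number. Let p ∈ [1/m̄, 1]^n be a vector with Σ_{i=1}^n p_i ≤ 1, and let δ ∈ ℝ^n be a vector such that |δ_i| ≤ ε·√(p_i/m̄) for each 1 ≤ i ≤ n and |Σ_{i=1}^n δ_i| ≤ ε·n̄/m̄. Then for every real m ∈ [0, m̄] and every Γ ∈ ℝ^n with Γ_i ∈ [−√(p_i·m̄), √(p_i·m̄)] for all i, it holds that (1 − 8n̄ε)·∏_{i=1}^n p_i^{p_i m + Γ_i} ≤ ∏_{i=1}^n (p_i + δ_i)^{p_i m + Γ_i} ≤ (1 + 8n̄ε)·∏_{i=1}^n p_i^{p_i m + Γ_i}. -/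
open Finset

lemma log_aux10 {x : ℝ} (hx : |x| ≤ 1/2) : |Real.log (1+x) - x| ≤ 2 * x^2 := by
  have hx1 : -(1/2) ≤ x := (abs_le.1 hx).1
  have hx2 : x ≤ 1/2 := (abs_le.1 hx).2
  have hpos : (0:ℝ) < 1 + x := by linarith
  have h1 : Real.log (1+x) ≤ x := by
    have := Real.log_le_sub_one_of_pos hpos; linarith
  have h2 : 1 - (1+x)⁻¹ ≤ Real.log (1+x) := Real.one_sub_inv_le_log_of_pos hpos
  have hinv : (1+x)⁻¹ ≤ 2 := by
    rw [inv_le_comm₀ hpos (by norm_num)]; linarith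
  have hinv' : 1 - (1+x)⁻¹ - x = -(x^2 * (1+x)⁻¹) := by
    field_simp; ring
  rw [abs_le]
  constructor
  · have : x^2 * (1+x)⁻¹ ≤ x^2 * 2 :=
      mul_le_mul_of_nonneg_left hinv (sq_nonneg x)
    nlinarith [h2, hinv']
  · nlinarith [sq_nonneg x]

set_option maxHeartbeats 1000000 in
theorem stmt10 (mbar n nbar : ℕ) (hmbar : 1 ≤ mbar) (hn : 1 ≤ n) (hnn : n ≤ nbar)
    (ε : ℝ) (hε0 : 0 ≤ ε) (hε1 : ε ≤ 1 / (8 * nbar))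
    (p : Fin n → ℝ) (hp : ∀ i, p i ∈ Set.Icc (1 / (mbar : ℝ)) 1)
    (hpsum : ∑ i, p i ≤ 1)
    (δ : Fin n → ℝ)
    (hδ : ∀ i, |δ i| ≤ ε * Real.sqrt (p i / mbar))
    (hδsum : |∑ i, δ i| ≤ ε * nbar / mbar)
    (m : ℝ) (hm0 : 0 ≤ m) (hm1 : m ≤ mbar)
    (Γ : Fin n → ℝ)
    (hΓ : ∀ i, Γ i ∈ Set.Icc (-Real.sqrt (p i * mbar)) (Real.sqrt (p i * mbar))) :
    (1 - 8 * nbar * ε) * ∏ i, p i ^ (p i * m + Γ i) ≤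
        (∏ i, (p i + δ i) ^ (p i * m + Γ i)) ∧
      (∏ i, (p i + δ i) ^ (p i * m + Γ i)) ≤
        (1 + 8 * nbar * ε) * ∏ i, p i ^ (p i * m + Γ i) := by
  have hmb1 : (1:ℝ) ≤ (mbar:ℝ) := by exact_mod_cast hmbar
  have hmb0 : (0:ℝ) < (mbar:ℝ) := by linarith
  have hnb1 : (1:ℝ) ≤ (nbar:ℝ) := by exact_mod_cast le_trans hn hnn
  have hnb0 : (0:ℝ) < (nbar:ℝ) := by linarith
  have hεsmall : 8 * (nbar:ℝ) * ε ≤ 1 := by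
    have h8 : (0:ℝ) < 8 * (nbar:ℝ) := by positivity
    rw [le_div_iff₀ h8] at hε1
    nlinarith
  have hε8 : ε ≤ 1/8 := by nlinarith
  have hppos : ∀ i, 0 < p i := fun i =>
    lt_of_lt_of_le (by positivity) (hp i).1
  have hpm1 : ∀ i, 1 ≤ p i * mbar := fun i => by
    have := (hp i).1
    rw [div_le_iff₀ hmb0] at this
    linarith
  -- |δ i| ≤ ε * p i
  have hδp : ∀ i, |δ i| ≤ ε * p i := by
    intro i
    have h1 : Real.sqrt (p i / mbar) ≤ p i := by
      have : p i / mbar ≤ p i ^ 2 := by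
        rw [div_le_iff₀ hmb0]
        nlinarith [hpm1 i, hppos i]
      calc Real.sqrt (p i / mbar) ≤ Real.sqrt (p i ^ 2) := Real.sqrt_le_sqrt this
        _ = p i := Real.sqrt_sq (hppos i).le
    exact le_trans (hδ i) (mul_le_mul_of_nonneg_left h1 hε0)
  -- positivity of p i + δ i
  have hpδ : ∀ i, 0 < p i + δ i := by
    intro i
    have := abs_le.1 (hδp i)
    nlinarith [hppos i]
  set e : Fin n → ℝ := fun i => p i * m + Γ i with he
  set x : Fin n → ℝ := fun i => δ i / p i with hxdef
  have hxabs : ∀ i, |x i| ≤ ε := by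
    intro i
    rw [hxdef]
    simp only [abs_div, abs_of_pos (hppos i)]
    rw [div_le_iff₀ (hppos i)]
    exact hδp i
  have hxhalf : ∀ i, |x i| ≤ 1/2 := fun i => le_trans (hxabs i) (by linarith)
  -- product identity
  have hprodeq : (∏ i, (p i + δ i) ^ (p i * m + Γ i)) =
      (∏ i, p i ^ (p i * m + Γ i)) * Real.exp (∑ i, e i * Real.log (1 + x i)) := by
    rw [Real.exp_sum, ← Finset.prod_mul_distrib]
    · congr 1
      funext i
      have hbase : p i + δ i = p i * (1 + x i) := by
        rw [hxdef]
        rw [mul_add, mul_one, mul_div_cancel₀ _ (hppos i).ne']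
      have h1x : 0 < 1 + x i := by
        have := abs_le.1 (hxhalf i); linarith
      rw [hbase, Real.mul_rpow (hppos i).le h1x.le,
        Real.rpow_def_of_pos h1x]
      simp only [he]
      ring_nf
  set S : ℝ := ∑ i, e i * Real.log (1 + x i) with hS
  have hpm0 : ∀ i, (0:ℝ) < p i * mbar := fun i => mul_pos (hppos i) hmb0
  have hpdm0 : ∀ i, (0:ℝ) < p i / mbar := fun i => div_pos (hppos i) hmb0
  -- per-term bounds
  have hΓabs : ∀ i, |Γ i| ≤ Real.sqrt (p i * mbar) := fun i =>
    abs_le.2 ⟨(hΓ i).1, (hΓ i).2⟩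
  have hsq : ∀ i, Real.sqrt (p i * mbar) * Real.sqrt (p i / mbar) = p i := by
    intro i
    rw [← Real.sqrt_mul (hpm0 i).le]
    rw [show p i * mbar * (p i / mbar) = p i ^ 2 by field_simp]
    exact Real.sqrt_sq (hppos i).le
  have hΓx : ∀ i, |Γ i * x i| ≤ ε := by
    intro i
    have hxb : |x i| ≤ ε * Real.sqrt (p i / mbar) / p i := by
      rw [hxdef]
      simp only [abs_div, abs_of_pos (hppos i)]
      rw [div_le_div_iff₀ (hppos i) (hppos i)]
      exact mul_le_mul_of_nonneg_right (hδ i) (hppos i).le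
    calc |Γ i * x i| = |Γ i| * |x i| := abs_mul _ _
      _ ≤ Real.sqrt (p i * mbar) * (ε * Real.sqrt (p i / mbar) / p i) :=
          mul_le_mul (hΓabs i) hxb (abs_nonneg _) (Real.sqrt_nonneg _)
      _ = ε * (Real.sqrt (p i * mbar) * Real.sqrt (p i / mbar)) / p i := by ring
      _ = ε := by
          rw [hsq i, mul_div_assoc, div_self (hppos i).ne', mul_one]
  have heabs : ∀ i, |e i| ≤ 2 * (p i * mbar) := by
    intro i
    have hsle : Real.sqrt (p i * mbar) ≤ p i * mbar := by
      have h1 := hpm1 i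
      calc Real.sqrt (p i * mbar) ≤ Real.sqrt ((p i * mbar)^2) :=
            Real.sqrt_le_sqrt (by nlinarith)
        _ = p i * mbar := Real.sqrt_sq (hpm0 i).le
    have hpim : p i * m ≤ p i * mbar := mul_le_mul_of_nonneg_left hm1 (hppos i).le
    simp only [he]
    calc |p i * m + Γ i| ≤ |p i * m| + |Γ i| := abs_add_le _ _
      _ ≤ p i * mbar + Real.sqrt (p i * mbar) := by
          rw [abs_of_nonneg (mul_nonneg (hppos i).le hm0)]
          exact add_le_add hpim (hΓabs i)
      _ ≤ 2 * (p i * mbar) := by linarith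
  have hx2 : ∀ i, x i ^ 2 ≤ ε ^ 2 / (p i * mbar) := by
    intro i
    have hd2 : δ i ^ 2 ≤ ε ^ 2 * (p i / mbar) := by
      have h1 := hδ i
      have h2 : (ε * Real.sqrt (p i / mbar)) ^ 2 = ε ^ 2 * (p i / mbar) := by
        rw [mul_pow, Real.sq_sqrt (hpdm0 i).le]
      nlinarith [abs_nonneg (δ i), sq_abs (δ i)]
    rw [hxdef]
    simp only
    rw [div_pow, div_le_div_iff₀ (pow_pos (hppos i) 2) (hpm0 i)]
    calc δ i ^ 2 * (p i * mbar) ≤ ε ^ 2 * (p i / mbar) * (p i * mbar) :=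
          mul_le_mul_of_nonneg_right hd2 (hpm0 i).le
      _ = ε ^ 2 * p i ^ 2 := by
          have hpne : (p i) ≠ 0 := (hppos i).ne'
          have hmne : ((mbar:ℝ)) ≠ 0 := hmb0.ne'
          field_simp
  have herr : ∀ i, |e i * (Real.log (1 + x i) - x i)| ≤ 4 * ε ^ 2 := by
    intro i
    calc |e i * (Real.log (1 + x i) - x i)| = |e i| * |Real.log (1 + x i) - x i| :=
          abs_mul _ _
      _ ≤ (2 * (p i * mbar)) * (2 * x i ^ 2) :=
          mul_le_mul (heabs i) (log_aux10 (hxhalf i)) (abs_nonneg _)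
            (by linarith [hpm0 i])
      _ ≤ (2 * (p i * mbar)) * (2 * (ε ^ 2 / (p i * mbar))) := by
          have := hx2 i
          have hb : (0:ℝ) ≤ 2 * (p i * mbar) := by linarith [hpm0 i]
          apply mul_le_mul_of_nonneg_left _ hb
          linarith
      _ = 4 * ε ^ 2 := by
          have hne : p i * (mbar:ℝ) ≠ 0 := (hpm0 i).ne'
          field_simp
          rw [mul_assoc, mul_div_assoc, mul_div_cancel_left₀ _ (hppos i).ne']
          ring
  -- split S
  have hex : ∀ i, e i * x i = m * δ i + Γ i * x i := by
    intro i
    simp only [he, hxdef]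
    have hpne : (p i) ≠ 0 := (hppos i).ne'
    field_simp
  have hSsplit : S = m * (∑ i, δ i) + (∑ i, Γ i * x i) +
      ∑ i, e i * (Real.log (1 + x i) - x i) := by
    rw [hS, Finset.mul_sum, ← Finset.sum_add_distrib, ← Finset.sum_add_distrib]
    refine Finset.sum_congr rfl fun i _ => ?_
    have h := hex i
    nlinarith [h, mul_sub (e i) (Real.log (1 + x i)) (x i)]
  have hncast : (n:ℝ) ≤ (nbar:ℝ) := by exact_mod_cast hnn
  have hSabs : |S| ≤ 5/2 * ((nbar:ℝ) * ε) := by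
    have h1 : |m * ∑ i, δ i| ≤ ε * nbar := by
      rw [abs_mul, abs_of_nonneg hm0]
      calc m * |∑ i, δ i| ≤ (mbar:ℝ) * (ε * nbar / mbar) := by
            apply mul_le_mul hm1 hδsum (abs_nonneg _) hmb0.le
        _ = ε * nbar := by field_simp
    have h2 : |∑ i, Γ i * x i| ≤ n * ε := by
      calc |∑ i, Γ i * x i| ≤ ∑ i, |Γ i * x i| := Finset.abs_sum_le_sum_abs _ _
        _ ≤ ∑ _i : Fin n, ε := Finset.sum_le_sum fun i _ => hΓx i
        _ = n * ε := by simp [mul_comm]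
    have h3 : |∑ i, e i * (Real.log (1 + x i) - x i)| ≤ n * (4 * ε ^ 2) := by
      calc |∑ i, e i * (Real.log (1 + x i) - x i)|
          ≤ ∑ i, |e i * (Real.log (1 + x i) - x i)| := Finset.abs_sum_le_sum_abs _ _
        _ ≤ ∑ _i : Fin n, 4 * ε ^ 2 := Finset.sum_le_sum fun i _ => herr i
        _ = n * (4 * ε ^ 2) := by simp [mul_comm]
    have h4 : |S| ≤ ε * nbar + n * ε + n * (4 * ε ^ 2) := by
      rw [hSsplit]
      calc |m * (∑ i, δ i) + (∑ i, Γ i * x i) + ∑ i, e i * (Real.log (1 + x i) - x i)|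
          ≤ |m * (∑ i, δ i) + (∑ i, Γ i * x i)| +
            |∑ i, e i * (Real.log (1 + x i) - x i)| := abs_add_le _ _
        _ ≤ |m * (∑ i, δ i)| + |∑ i, Γ i * x i| +
            |∑ i, e i * (Real.log (1 + x i) - x i)| := by
            linarith [abs_add_le (m * (∑ i, δ i)) (∑ i, Γ i * x i)]
        _ ≤ ε * nbar + n * ε + n * (4 * ε ^ 2) := by linarith
    have h5 : (n:ℝ) * ε ≤ nbar * ε := mul_le_mul_of_nonneg_right hncast hε0
    have h6 : (n:ℝ) * (4 * ε ^ 2) ≤ (nbar:ℝ) * ε / 2 := by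
      have : (n:ℝ) * (4 * ε ^ 2) ≤ (nbar:ℝ) * (4 * ε ^ 2) := by
        apply mul_le_mul_of_nonneg_right hncast (by positivity)
      nlinarith [mul_le_mul_of_nonneg_right hεsmall hε0]
    linarith
  -- conclude
  have hApos : 0 < ∏ i, p i ^ (p i * m + Γ i) :=
    Finset.prod_pos fun i _ => Real.rpow_pos_of_pos (hppos i) _
  have ht0 : (0:ℝ) ≤ (nbar:ℝ) * ε := by positivity
  have hexp_lo : 1 - 8 * (nbar:ℝ) * ε ≤ Real.exp S := by
    have h1 := Real.add_one_le_exp S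
    have h2 := abs_le.1 hSabs
    nlinarith
  have hexp_hi : Real.exp S ≤ 1 + 8 * (nbar:ℝ) * ε := by
    have h1 : Real.exp S * (1 - S) ≤ 1 := by
      have h2 := Real.add_one_le_exp (-S)
      have h3 : Real.exp S * Real.exp (-S) = 1 := by
        rw [← Real.exp_add]; simp
      nlinarith [Real.exp_pos S, mul_le_mul_of_nonneg_left h2 (Real.exp_pos S).le]
    have hSub := (abs_le.1 hSabs).2
    have hSlb := (abs_le.1 hSabs).1
    have hSlt : S ≤ 5/16 := by nlinarith
    have hpos1S : (0:ℝ) < 1 - S := by linarith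
    have h2 : (1:ℝ) ≤ (1 + 8 * (nbar:ℝ) * ε) * (1 - S) := by nlinarith
    have h3 : Real.exp S * (1 - S) ≤ (1 + 8 * (nbar:ℝ) * ε) * (1 - S) :=
      h1.trans h2
    exact le_of_mul_le_mul_right (by linarith [h3]) hpos1S
  constructor
  · rw [hprodeq]
    calc (1 - 8 * (nbar:ℝ) * ε) * ∏ i, p i ^ (p i * m + Γ i)
        = (∏ i, p i ^ (p i * m + Γ i)) * (1 - 8 * (nbar:ℝ) * ε) := mul_comm _ _
      _ ≤ (∏ i, p i ^ (p i * m + Γ i)) * Real.exp S :=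
          mul_le_mul_of_nonneg_left hexp_lo hApos.le
  · rw [hprodeq]
    calc (∏ i, p i ^ (p i * m + Γ i)) * Real.exp S
        ≤ (∏ i, p i ^ (p i * m + Γ i)) * (1 + 8 * (nbar:ℝ) * ε) :=
          mul_le_mul_of_nonneg_left hexp_hi hApos.le
      _ = (1 + 8 * (nbar:ℝ) * ε) * ∏ i, p i ^ (p i * m + Γ i) := mul_comm _ _
end

section
/- Let M = (S, A, P, R, H, μ) be a finite MDP and π a (possibly non-stationary) deterministic policy, and let T = ((s_0, a_0, r_0), …, (s_{H−1}, a_{H−1}, r_{H−1}), s_H) be a random trajectory obtained by executing π in M. Then for any (s, a, s′) ∈ S × A × S and any δ ∈ (0,1], with probability at least 1 − δ, Σ_{h=0}^{H−1} 1[(s_h, a_h, s_{h+1}) = (s, a, s′)] ≤ ((2·Q_{δ/2}(Σ_{h=0}^{H−1} 1[(s_h, a_h) = (s, a)]) + 4)/δ) · P(s′ | s, a). -/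
open Finset

/-- Number of times the state-action-state triple `z` is visited during the first `K` steps. -/
def nVisits3 {S A : Type} [DecidableEq S] [DecidableEq A] (π : ℕ → S → A) (K : ℕ)
    (z : S × A × S) (f : ℕ → S) : ℕ :=
  ∑ h ∈ Finset.range K, if (f h, π h (f h), f (h + 1)) = z then 1 else 0

def snocF {S : Type} (K : ℕ) (f : ℕ → S) (x : S) : ℕ → S := fun n => if n ≤ K then f n else x

lemma snocF_le {S : Type} {K n : ℕ} (h : n ≤ K) (f : ℕ → S) (x : S) : snocF K f x n = f n :=
  if_pos h

lemma snocF_gt {S : Type} {K n : ℕ} (h : K < n) (f : ℕ → S) (x : S) : snocF K f x n = x :=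
  if_neg (not_le.2 h)

def snocEquiv (S : Type) (K : ℕ) : ((Fin (K+1) → S) × S) ≃ (Fin (K+2) → S) where
  toFun p := Fin.snoc p.1 p.2
  invFun T := (Fin.init T, T (Fin.last _))
  left_inv p := by simp
  right_inv T := by simp

lemma extT_snoc {S : Type} (K : ℕ) (T : Fin (K+1) → S) (x : S) :
    extT (K+1) (Fin.snoc T x) = snocF K (extT K T) x := by
  funext n
  by_cases h : n ≤ K
  · have h1 : min n (K+1) = n := by omega
    have h2 : min n K = n := by omega
    simp only [extT, snocF, if_pos h, h1, h2]
    have : (⟨n, by omega⟩ : Fin (K+2)) = Fin.castSucc ⟨n, by omega⟩ := rfl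
    rw [this, Fin.snoc_castSucc]
  · have h1 : min n (K+1) = K+1 := by omega
    simp only [extT, snocF, if_neg h, h1]
    have : (⟨K+1, by omega⟩ : Fin (K+2)) = Fin.last (K+1) := rfl
    rw [this, Fin.snoc_last]

lemma sum_snoc {S : Type} [Fintype S] (K : ℕ) (g : (ℕ → S) → ℝ) :
    ∑ T : Fin (K+2) → S, g (extT (K+1) T)
      = ∑ T : Fin (K+1) → S, ∑ x : S, g (snocF K (extT K T) x) := by
  rw [← Equiv.sum_comp (snocEquiv S K) (fun T => g (extT (K+1) T)), Fintype.sum_prod_type]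
  exact Finset.sum_congr rfl fun T _ => Finset.sum_congr rfl fun x _ => by
    simp only [snocEquiv, Equiv.coe_fn_mk, extT_snoc]

lemma trajP_snoc {S A : Type} (μ : S → ℝ) (P : S → A → S → ℝ) (π : ℕ → S → A)
    (K : ℕ) (f : ℕ → S) (x : S) :
    trajP μ P π (K+1) (snocF K f x) = trajP μ P π K f * P (f K) (π K (f K)) x := by
  unfold trajP
  rw [prod_range_succ, snocF_le (Nat.zero_le K), snocF_le (le_refl K),
    snocF_gt (Nat.lt_succ_self K), ← mul_assoc]
  congr 2
  exact Finset.prod_congr rfl fun h hh => by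
    have h1 : h < K := mem_range.1 hh
    rw [snocF_le (le_of_lt h1), snocF_le (by omega : h + 1 ≤ K)]

lemma sum_helper {S A : Type} [Fintype S] (μ : S → ℝ) (P : S → A → S → ℝ)
    (hP1 : ∀ s a, ∑ s', P s a s' = 1) (π : ℕ → S → A) (K : ℕ) (F : (ℕ → S) → ℝ)
    (hF : ∀ f x, F (snocF K f x) = F f) :
    ∑ T : Fin (K+2) → S, F (extT (K+1) T) * trajP μ P π (K+1) (extT (K+1) T)
      = ∑ T : Fin (K+1) → S, F (extT K T) * trajP μ P π K (extT K T) := by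
  rw [sum_snoc K (fun f => F f * trajP μ P π (K+1) f)]
  refine Finset.sum_congr rfl fun T _ => ?_
  have : ∀ x : S, F (snocF K (extT K T) x) * trajP μ P π (K+1) (snocF K (extT K T) x)
      = F (extT K T) * trajP μ P π K (extT K T) * P (extT K T K) (π K (extT K T K)) x := by
    intro x; rw [hF, trajP_snoc, mul_assoc]
  rw [Finset.sum_congr rfl fun x _ => this x, ← Finset.mul_sum, hP1, mul_one]

lemma total_prob {S A : Type} [Fintype S] (μ : S → ℝ) (hμ1 : ∑ s, μ s = 1)
    (P : S → A → S → ℝ) (hP1 : ∀ s a, ∑ s', P s a s' = 1) (π : ℕ → S → A) :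
    ∀ H, ∑ T : Fin (H+1) → S, trajP μ P π H (extT H T) = 1 := by
  intro H
  induction H with
  | zero =>
    rw [← Equiv.sum_comp (Equiv.funUnique (Fin 1) S).symm
      (fun T => trajP μ P π 0 (extT 0 T))]
    simp only [trajP, Finset.range_zero, Finset.prod_empty, mul_one]
    rw [← hμ1]
    exact Finset.sum_congr rfl fun x _ => rfl
  | succ K IH =>
    have := sum_helper μ P hP1 π K (fun _ => 1) (fun _ _ => rfl)
    simpa [IH] using this

lemma trajP_nonneg {S A : Type} (μ : S → ℝ) (P : S → A → S → ℝ) (π : ℕ → S → A)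
    (hμ0 : ∀ s, 0 ≤ μ s) (hP0 : ∀ s a s', 0 ≤ P s a s') (H : ℕ) (f : ℕ → S) :
    0 ≤ trajP μ P π H f :=
  mul_nonneg (hμ0 _) (Finset.prod_nonneg fun _ _ => hP0 _ _ _)
lemma iteOneMul {c : Prop} [Decidable c] (r : ℝ) :
    (if c then (1:ℝ) else 0) * r = if c then r else 0 := by split <;> simp

lemma cond_lemma {S A : Type} [Fintype S] [DecidableEq S] (μ : S → ℝ) (P : S → A → S → ℝ)
    (hP1 : ∀ s a, ∑ s', P s a s' = 1) (π : ℕ → S → A) (s : S) (a : A) (s' : S)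
    (h : ℕ) (E : (ℕ → S) → Prop) [DecidablePred E]
    (hEc : ∀ f g : ℕ → S, (∀ n ≤ h, f n = g n) → (E f ↔ E g))
    (hEsa : ∀ f, E f → f h = s ∧ π h (f h) = a) :
    ∀ H, h < H →
    (∑ T : Fin (H+1) → S,
        if E (extT H T) ∧ extT H T (h+1) = s' then trajP μ P π H (extT H T) else 0)
      = P s a s' *
        ∑ T : Fin (H+1) → S, if E (extT H T) then trajP μ P π H (extT H T) else 0 := by
  have hEsnoc : ∀ (K : ℕ), h ≤ K → ∀ (f : ℕ → S) (x : S), E (snocF K f x) ↔ E f := by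
    intro K hK f x
    exact hEc _ _ fun n hn => snocF_le (le_trans hn hK) f x
  intro H
  induction H with
  | zero => omega
  | succ K IH =>
    intro hH
    rcases Nat.lt_succ_iff_lt_or_eq.1 hH with hlt | heq
    · -- inductive step: h < K
      have hstep1 := sum_helper μ P hP1 π K
        (fun f => if E f ∧ f (h+1) = s' then (1:ℝ) else 0)
        (by
          intro f x
          have e1 : E (snocF K f x) ↔ E f := hEsnoc K (le_of_lt hlt) f x
          have e2 : snocF K f x (h+1) = f (h+1) := snocF_le (by omega) f x
          simp [e1, e2])
      have hstep2 := sum_helper μ P hP1 π K (fun f => if E f then (1:ℝ) else 0)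
        (by intro f x; simp [hEsnoc K (le_of_lt hlt) f x])
      calc (∑ T : Fin (K+2) → S,
              if E (extT (K+1) T) ∧ extT (K+1) T (h+1) = s' then trajP μ P π (K+1) (extT (K+1) T) else 0)
          = ∑ T : Fin (K+2) → S,
              (if E (extT (K+1) T) ∧ extT (K+1) T (h+1) = s' then (1:ℝ) else 0) *
                trajP μ P π (K+1) (extT (K+1) T) := by
            exact Finset.sum_congr rfl fun T _ => (iteOneMul _).symm
        _ = ∑ T : Fin (K+1) → S,
              (if E (extT K T) ∧ extT K T (h+1) = s' then (1:ℝ) else 0) *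
                trajP μ P π K (extT K T) := hstep1
        _ = ∑ T : Fin (K+1) → S,
              if E (extT K T) ∧ extT K T (h+1) = s' then trajP μ P π K (extT K T) else 0 := by
            exact Finset.sum_congr rfl fun T _ => iteOneMul _
        _ = P s a s' * ∑ T : Fin (K+1) → S,
              if E (extT K T) then trajP μ P π K (extT K T) else 0 := IH hlt
        _ = P s a s' * ∑ T : Fin (K+1) → S,
              (if E (extT K T) then (1:ℝ) else 0) * trajP μ P π K (extT K T) := by
            rw [Finset.sum_congr rfl fun T _ => (iteOneMul _).symm]
        _ = P s a s' * ∑ T : Fin (K+2) → S,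
              (if E (extT (K+1) T) then (1:ℝ) else 0) * trajP μ P π (K+1) (extT (K+1) T) := by
            rw [hstep2]
        _ = _ := by rw [Finset.sum_congr rfl fun T _ => iteOneMul _]
    · -- base case: h = K
      subst heq
      rw [sum_snoc h (fun f => if E f ∧ f (h+1) = s' then trajP μ P π (h+1) f else 0)]
      have key : ∀ T : Fin (h+1) → S,
          (∑ x : S, if E (snocF h (extT h T) x) ∧ snocF h (extT h T) x (h+1) = s'
              then trajP μ P π (h+1) (snocF h (extT h T) x) else 0)
          = P s a s' * (if E (extT h T) then trajP μ P π h (extT h T) else 0) := by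
        intro T
        set f := extT h T with hf
        have e1 : ∀ x, E (snocF h f x) ↔ E f := hEsnoc h le_rfl f
        have e2 : ∀ x : S, snocF h f x (h+1) = x := fun x => snocF_gt (by omega) f x
        have : ∀ x : S, (if E (snocF h f x) ∧ snocF h f x (h+1) = s'
              then trajP μ P π (h+1) (snocF h f x) else 0)
            = if x = s' then (if E f then trajP μ P π h f * P (f h) (π h (f h)) x else 0) else 0 := by
          intro x
          rw [trajP_snoc]
          by_cases hx : x = s' <;> by_cases hEf : E f <;>
            simp [e1, e2, hx, hEf, and_comm]
        rw [Finset.sum_congr rfl fun x _ => this x, Finset.sum_ite_eq' Finset.univ s'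
          (fun x => if E f then trajP μ P π h f * P (f h) (π h (f h)) x else 0)]
        simp only [Finset.mem_univ, if_true]
        by_cases hEf : E f
        · obtain ⟨hs, ha⟩ := hEsa f hEf
          rw [if_pos hEf, if_pos hEf, ha, hs]; ring
        · simp [hEf]
      rw [Finset.sum_congr rfl fun T _ => key T, ← Finset.mul_sum]
      congr 1
      calc ∑ T : Fin (h+1) → S, (if E (extT h T) then trajP μ P π h (extT h T) else 0)
          = ∑ T : Fin (h+1) → S,
              (if E (extT h T) then (1:ℝ) else 0) * trajP μ P π h (extT h T) := by
            exact Finset.sum_congr rfl fun T _ => (iteOneMul _).symm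
        _ = ∑ T : Fin (h+2) → S,
              (if E (extT (h+1) T) then (1:ℝ) else 0) * trajP μ P π (h+1) (extT (h+1) T) := by
            rw [sum_helper μ P hP1 π h (fun f => if E f then (1:ℝ) else 0)
              (by intro f x; simp [hEsnoc h le_rfl f x])]
        _ = _ := Finset.sum_congr rfl fun T _ => iteOneMul _

section counting
variable {S A : Type} [DecidableEq S] [DecidableEq A]

lemma nVisits_congr (π : ℕ → S → A) (K : ℕ) (z : S × A) {f g : ℕ → S}
    (hfg : ∀ n < K, f n = g n) : nVisits π K z f = nVisits π K z g := by
  unfold nVisits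
  exact Finset.sum_congr rfl fun h hh => by rw [hfg h (mem_range.1 hh)]

lemma nVisits_mono (π : ℕ → S → A) {K L : ℕ} (h : K ≤ L) (z : S × A) (f : ℕ → S) :
    nVisits π K z f ≤ nVisits π L z f :=
  Finset.sum_le_sum_of_subset (Finset.range_subset_range.2 h)

lemma nVisits_le (π : ℕ → S → A) (K : ℕ) (z : S × A) (f : ℕ → S) :
    nVisits π K z f ≤ K := by
  unfold nVisits
  calc ∑ h ∈ Finset.range K, (if (f h, π h (f h)) = z then 1 else 0)
      ≤ ∑ _h ∈ Finset.range K, 1 := Finset.sum_le_sum fun h _ => by split <;> omega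
    _ = K := by simp

/-- number of `(s,a,s')` transitions among the first `m` visits to `(s,a)`. -/
def n3trunc (π : ℕ → S → A) (m K : ℕ) (s : S) (a : A) (s' : S) (f : ℕ → S) : ℕ :=
  ∑ h ∈ Finset.range K,
    if (f h, π h (f h)) = (s, a) ∧ f (h+1) = s' ∧ nVisits π (h+1) (s,a) f ≤ m then 1 else 0

lemma count_aux (π : ℕ → S → A) (s : S) (a : A) (f : ℕ → S) (m : ℕ) : ∀ K,
    (∑ h ∈ Finset.range K,
        if (f h, π h (f h)) = (s,a) ∧ nVisits π (h+1) (s,a) f ≤ m then 1 else 0)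
      ≤ min (nVisits π K (s,a) f) m := by
  intro K
  induction K with
  | zero => simp [nVisits]
  | succ K IH =>
    rw [Finset.sum_range_succ]
    have hnv : nVisits π (K+1) (s,a) f
        = nVisits π K (s,a) f + (if (f K, π K (f K)) = (s,a) then 1 else 0) :=
      Finset.sum_range_succ _ K
    by_cases hc : (f K, π K (f K)) = (s,a) ∧ nVisits π (K+1) (s,a) f ≤ m
    · rw [if_pos hc]
      rw [if_pos hc.1] at hnv
      have h2 := hc.2
      omega
    · rw [if_neg hc, add_zero]
      refine le_trans IH (min_le_min ?_ le_rfl)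
      rw [hnv]; omega

lemma count_le (π : ℕ → S → A) (s : S) (a : A) (f : ℕ → S) (m K : ℕ) :
    (∑ h ∈ Finset.range K,
        if (f h, π h (f h)) = (s,a) ∧ nVisits π (h+1) (s,a) f ≤ m then 1 else 0)
      ≤ m :=
  le_trans (count_aux π s a f m K) (min_le_right _ _)

lemma n3trunc_eq (π : ℕ → S → A) (s : S) (a : A) (s' : S) (f : ℕ → S) (m H : ℕ)
    (hm : nVisits π H (s,a) f ≤ m) :
    n3trunc π m H s a s' f = nVisits3 π H (s,a,s') f := by
  unfold n3trunc nVisits3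
  refine Finset.sum_congr rfl fun h hh => ?_
  have h1 : nVisits π (h+1) (s,a) f ≤ m :=
    le_trans (nVisits_mono π (mem_range.1 hh) _ f) hm
  by_cases ht : (f h, π h (f h), f (h+1)) = (s, a, s')
  · have h2 : (f h, π h (f h)) = (s,a) ∧ f (h+1) = s' := by
      simp only [Prod.mk.injEq] at ht ⊢
      exact ⟨⟨ht.1, ht.2.1⟩, ht.2.2⟩
    rw [if_pos ⟨h2.1, h2.2, h1⟩, if_pos ht]
  · rw [if_neg ?_, if_neg ht]
    rintro ⟨c1, c2, -⟩
    exact ht (by simp only [Prod.mk.injEq] at c1 ⊢; exact ⟨c1.1, c1.2, c2⟩)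

end counting

lemma expect_le {S A : Type} [Fintype S] [DecidableEq S] [DecidableEq A]
    (μ : S → ℝ) (P : S → A → S → ℝ) (π : ℕ → S → A)
    (hμ0 : ∀ s, 0 ≤ μ s) (hμ1 : ∑ s, μ s = 1)
    (hP0 : ∀ s a s', 0 ≤ P s a s') (hP1 : ∀ s a, ∑ s', P s a s' = 1)
    (s : S) (a : A) (s' : S) (m H : ℕ) :
    ∑ T : Fin (H+1) → S, (n3trunc π m H s a s' (extT H T) : ℝ) * trajP μ P π H (extT H T)
      ≤ P s a s' * m := by
  have step1 : ∀ f : ℕ → S, (n3trunc π m H s a s' f : ℝ)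
      = ∑ h ∈ Finset.range H,
          if (f h, π h (f h)) = (s, a) ∧ f (h+1) = s' ∧ nVisits π (h+1) (s,a) f ≤ m
          then (1:ℝ) else 0 := by
    intro f
    unfold n3trunc
    push_cast
    exact Finset.sum_congr rfl fun h _ => by split <;> simp
  calc ∑ T : Fin (H+1) → S, (n3trunc π m H s a s' (extT H T) : ℝ) * trajP μ P π H (extT H T)
      = ∑ h ∈ Finset.range H, ∑ T : Fin (H+1) → S,
          (if (extT H T h, π h (extT H T h)) = (s, a) ∧ extT H T (h+1) = s'
              ∧ nVisits π (h+1) (s,a) (extT H T) ≤ m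
          then trajP μ P π H (extT H T) else 0) := by
        refine Eq.trans (Finset.sum_congr rfl fun T _ => ?_) Finset.sum_comm
        rw [step1, Finset.sum_mul]
        exact Finset.sum_congr rfl fun h _ => iteOneMul _
    _ = ∑ h ∈ Finset.range H, P s a s' * ∑ T : Fin (H+1) → S,
          (if (extT H T h, π h (extT H T h)) = (s, a)
              ∧ nVisits π (h+1) (s,a) (extT H T) ≤ m
          then trajP μ P π H (extT H T) else 0) := by
        refine Finset.sum_congr rfl fun h hh => ?_
        have hc := cond_lemma μ P hP1 π s a s' h
          (fun f => (f h, π h (f h)) = (s,a) ∧ nVisits π (h+1) (s,a) f ≤ m)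
          (fun f g hfg => by
            rw [hfg h le_rfl, nVisits_congr π (h+1) (s,a) (fun n hn => hfg n (by omega))])
          (fun f hf => by
            have := hf.1
            simp only [Prod.mk.injEq] at this
            exact ⟨this.1, by rw [this.1]; rw [this.1] at this; exact this.2⟩)
          H (mem_range.1 hh)
        rw [← hc]
        exact Finset.sum_congr rfl fun T _ => if_congr (by tauto) rfl rfl
    _ = P s a s' * ∑ T : Fin (H+1) → S,
          (∑ h ∈ Finset.range H,
            if (extT H T h, π h (extT H T h)) = (s, a)
                ∧ nVisits π (h+1) (s,a) (extT H T) ≤ m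
            then (1:ℝ) else 0) * trajP μ P π H (extT H T) := by
        rw [← Finset.mul_sum, Finset.sum_comm (s := Finset.range H) (t := Finset.univ)]
        congr 1
        refine Finset.sum_congr rfl fun T _ => ?_
        rw [Finset.sum_mul]
        exact Finset.sum_congr rfl fun h _ => (iteOneMul _).symm
    _ ≤ P s a s' * ∑ T : Fin (H+1) → S, (m : ℝ) * trajP μ P π H (extT H T) := by
        refine mul_le_mul_of_nonneg_left (Finset.sum_le_sum fun T _ => ?_) (hP0 s a s')
        refine mul_le_mul_of_nonneg_right ?_ (trajP_nonneg μ P π hμ0 hP0 H _)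
        have hcount := count_le π s a (extT H T) m H
        calc (∑ h ∈ Finset.range H,
                if (extT H T h, π h (extT H T h)) = (s, a)
                    ∧ nVisits π (h+1) (s,a) (extT H T) ≤ m
                then (1:ℝ) else 0)
            = ((∑ h ∈ Finset.range H,
                if (extT H T h, π h (extT H T h)) = (s, a)
                    ∧ nVisits π (h+1) (s,a) (extT H T) ≤ m
                then (1:ℕ) else 0 : ℕ) : ℝ) := by
              push_cast
              exact Finset.sum_congr rfl fun h _ => by split <;> simp
          _ ≤ (m : ℝ) := by exact_mod_cast hcount
    _ = P s a s' * m := by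
        rw [← Finset.mul_sum, total_prob μ hμ1 P hP1 π H, mul_one]


theorem stmt11 {S A : Type} [Fintype S] [DecidableEq S] [DecidableEq A]
    (μ : S → ℝ) (P : S → A → S → ℝ) (H : ℕ)
    (hμ0 : ∀ s, 0 ≤ μ s) (hμ1 : ∑ s, μ s = 1)
    (hP0 : ∀ s a s', 0 ≤ P s a s') (hP1 : ∀ s a, ∑ s', P s a s' = 1)
    (π : ℕ → S → A) (s : S) (a : A) (s' : S)
    (δ : ℝ) (hδ0 : 0 < δ) (hδ1 : δ ≤ 1) :
    1 - δ ≤ ∑ T : Fin (H + 1) → S,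
      if (nVisits3 π H (s, a, s') (extT H T) : ℝ) ≤
          (2 * quantNS μ P π H (fun g => (nVisits π H (s, a) g : ℝ)) (δ / 2) + 4) / δ *
            P s a s' then
        trajP μ P π H (extT H T)
      else 0 := by
  classical
  set p := P s a s' with hp_def
  set Q := quantNS μ P π H (fun g => (nVisits π H (s, a) g : ℝ)) (δ / 2) with hQ_def
  set Qset : Set ℝ := {x : ℝ | δ/2 ≤ ∑ T : Fin (H+1) → S,
    if x ≤ (nVisits π H (s,a) (extT H T) : ℝ) then trajP μ P π H (extT H T) else 0}
    with hQset_def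
  have hQs : Q = sSup Qset := rfl
  have htot := total_prob μ hμ1 P hP1 π H
  have htraj0 : ∀ T : Fin (H+1) → S, 0 ≤ trajP μ P π H (extT H T) := fun T =>
    trajP_nonneg μ P π hμ0 hP0 H _
  -- 0 ∈ Qset
  have h0mem : (0:ℝ) ∈ Qset := by
    have : ∑ T : Fin (H+1) → S,
        (if (0:ℝ) ≤ (nVisits π H (s,a) (extT H T) : ℝ) then trajP μ P π H (extT H T) else 0)
        = 1 := by
      rw [← htot]
      exact Finset.sum_congr rfl fun T _ => if_pos (Nat.cast_nonneg _)
    rw [hQset_def, Set.mem_setOf_eq, this]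
    linarith
  -- bounded above
  have hbdd : BddAbove Qset := by
    refine ⟨H, fun x hx => ?_⟩
    by_contra hxH
    push_neg at hxH
    have hzero : ∑ T : Fin (H+1) → S,
        (if x ≤ (nVisits π H (s,a) (extT H T) : ℝ) then trajP μ P π H (extT H T) else 0) = 0 := by
      refine Finset.sum_eq_zero fun T _ => if_neg ?_
      push_neg
      calc (nVisits π H (s,a) (extT H T) : ℝ) ≤ H := by
            exact_mod_cast nVisits_le π H (s,a) (extT H T)
        _ < x := hxH
    rw [hQset_def, Set.mem_setOf_eq, hzero] at hx
    linarith
  have hQnn : 0 ≤ Q := by rw [hQs]; exact le_csSup hbdd h0mem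
  set m := ⌊Q⌋₊ with hm_def
  have hmQ : (m : ℝ) ≤ Q := Nat.floor_le hQnn
  have hQm1 : Q < m + 1 := Nat.lt_floor_add_one Q
  -- Pr[N ≥ m+1] < δ/2
  have hPrTail : ∑ T : Fin (H+1) → S,
      (if ((m:ℝ)+1) ≤ (nVisits π H (s,a) (extT H T) : ℝ) then trajP μ P π H (extT H T) else 0)
      < δ/2 := by
    by_contra hcon
    push_neg at hcon
    have : ((m:ℝ)+1) ∈ Qset := hcon
    have := le_csSup hbdd this
    rw [← hQs] at this
    linarith
  -- split the goal
  set G : (Fin (H+1) → S) → Prop := fun T =>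
    (nVisits3 π H (s, a, s') (extT H T) : ℝ) ≤ (2 * Q + 4) / δ * p with hG_def
  have hsplit : (∑ T : Fin (H+1) → S, if G T then trajP μ P π H (extT H T) else 0)
      + (∑ T : Fin (H+1) → S, if ¬ G T then trajP μ P π H (extT H T) else 0) = 1 := by
    rw [← Finset.sum_add_distrib, ← htot]
    refine Finset.sum_congr rfl fun T _ => ?_
    by_cases hg : G T
    · rw [if_pos hg, if_neg (not_not_intro hg), add_zero]
    · rw [if_neg hg, if_pos hg, zero_add]
  have hmain : (∑ T : Fin (H+1) → S, if ¬ G T then trajP μ P π H (extT H T) else 0) ≤ δ := by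
    rcases eq_or_lt_of_le (hP0 s a s') with hp0 | hppos
    · -- p = 0 case
      refine le_trans (le_of_eq (Finset.sum_eq_zero fun T _ => ?_)) (le_of_lt hδ0)
      by_cases hg : G T
      · rw [if_neg (not_not_intro hg)]
      · rw [if_pos hg]
        -- ¬ G T with p = 0 forces a visit, hence trajP = 0
        have hp0' : p = 0 := hp_def.trans hp0.symm
        have hrhs : (2 * Q + 4) / δ * p = 0 := by rw [hp0', mul_zero]
        have h1 : ¬ (nVisits3 π H (s, a, s') (extT H T) : ℝ) ≤ 0 := by
          rw [hG_def] at hg; push_neg at hg; rw [hrhs] at hg; linarith [hg]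
        have h2 : 1 ≤ nVisits3 π H (s, a, s') (extT H T) := by
          by_contra h3
          exact h1 (by
            have : nVisits3 π H (s, a, s') (extT H T) = 0 := by omega
            rw [this]; norm_num)
        obtain ⟨h, hh, htr⟩ : ∃ h ∈ Finset.range H,
            (extT H T h, π h (extT H T h), extT H T (h+1)) = (s, a, s') := by
          by_contra hall
          push_neg at hall
          have : nVisits3 π H (s, a, s') (extT H T) = 0 :=
            Finset.sum_eq_zero fun h hh => if_neg (hall h hh)
          omega
        have hfac : P (extT H T h) (π h (extT H T h)) (extT H T (h+1)) = 0 := by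
          simp only [Prod.mk.injEq] at htr
          rw [htr.2.1, htr.1, htr.2.2]
          exact hp0.symm
        unfold trajP
        rw [Finset.prod_eq_zero hh hfac, mul_zero]
    · -- p > 0 case
      set t : ℝ := (2 * Q + 4) / δ * p with ht_def
      have ht0 : 0 < t := by
        apply mul_pos _ hppos
        apply div_pos _ hδ0
        linarith
      have hterm : ∀ T : Fin (H+1) → S,
          (if ¬ G T then trajP μ P π H (extT H T) else 0)
          ≤ (if ((m:ℝ)+1) ≤ (nVisits π H (s,a) (extT H T) : ℝ)
              then trajP μ P π H (extT H T) else 0)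
            + (if t ≤ (n3trunc π m H s a s' (extT H T) : ℝ)
              then trajP μ P π H (extT H T) else 0) := by
        intro T
        by_cases hg : G T
        · rw [if_neg (not_not_intro hg)]
          have : ∀ c : Prop, ∀ _ : Decidable c,
              0 ≤ (if c then trajP μ P π H (extT H T) else 0) := fun c _ => by
            split
            · exact htraj0 T
            · exact le_refl 0
          exact add_nonneg (this _ _) (this _ _)
        · rw [if_pos hg]
          by_cases hN : ((m:ℝ)+1) ≤ (nVisits π H (s,a) (extT H T) : ℝ)
          · rw [if_pos hN]
            have : 0 ≤ (if t ≤ (n3trunc π m H s a s' (extT H T) : ℝ)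
                then trajP μ P π H (extT H T) else 0) := by
              split
              · exact htraj0 T
              · exact le_refl 0
            linarith
          · -- N ≤ m, so n3trunc = nVisits3 > t
            push_neg at hN
            have hNm : nVisits π H (s,a) (extT H T) ≤ m := by
              have : (nVisits π H (s,a) (extT H T) : ℝ) < m + 1 := hN
              exact_mod_cast Nat.lt_add_one_iff.1 (by exact_mod_cast this)
            have heq := n3trunc_eq π s a s' (extT H T) m H hNm
            have hgt : t ≤ (n3trunc π m H s a s' (extT H T) : ℝ) := by
              rw [heq]
              rw [hG_def] at hg
              exact le_of_lt (lt_of_not_ge hg)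
            rw [if_pos hgt]
            have : 0 ≤ (if ((m:ℝ)+1) ≤ (nVisits π H (s,a) (extT H T) : ℝ)
                then trajP μ P π H (extT H T) else 0) := by
              split
              · exact htraj0 T
              · exact le_refl 0
            linarith
      have hmarkov : t * (∑ T : Fin (H+1) → S,
          if t ≤ (n3trunc π m H s a s' (extT H T) : ℝ) then trajP μ P π H (extT H T) else 0)
          ≤ p * m := by
        refine le_trans ?_ (expect_le μ P π hμ0 hμ1 hP0 hP1 s a s' m H)
        rw [Finset.mul_sum]
        refine Finset.sum_le_sum fun T _ => ?_
        by_cases hc : t ≤ (n3trunc π m H s a s' (extT H T) : ℝ)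
        · rw [if_pos hc]
          exact mul_le_mul_of_nonneg_right hc (htraj0 T)
        · rw [if_neg hc, mul_zero]
          exact mul_nonneg (Nat.cast_nonneg _) (htraj0 T)
      have hPrTrunc : (∑ T : Fin (H+1) → S,
          if t ≤ (n3trunc π m H s a s' (extT H T) : ℝ) then trajP μ P π H (extT H T) else 0)
          ≤ δ/2 := by
        have h1 : (∑ T : Fin (H+1) → S,
            if t ≤ (n3trunc π m H s a s' (extT H T) : ℝ) then trajP μ P π H (extT H T) else 0)
            ≤ p * m / t := by
          rw [le_div_iff₀ ht0]
          calc _ ≤ t * (∑ T : Fin (H+1) → S,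
              if t ≤ (n3trunc π m H s a s' (extT H T) : ℝ)
              then trajP μ P π H (extT H T) else 0) := by ring_nf; exact le_refl _
            _ ≤ p * m := hmarkov
        refine le_trans h1 ?_
        rw [div_le_iff₀ ht0, ht_def]
        have hδne : δ ≠ 0 := ne_of_gt hδ0
        have key : δ / 2 * ((2 * Q + 4) / δ * p) = (Q + 2) * p := by
          field_simp
          ring
        rw [key]
        nlinarith [hmQ, hppos]
      calc (∑ T : Fin (H+1) → S, if ¬ G T then trajP μ P π H (extT H T) else 0)
          ≤ (∑ T : Fin (H+1) → S, if ((m:ℝ)+1) ≤ (nVisits π H (s,a) (extT H T) : ℝ)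
              then trajP μ P π H (extT H T) else 0)
            + (∑ T : Fin (H+1) → S, if t ≤ (n3trunc π m H s a s' (extT H T) : ℝ)
              then trajP μ P π H (extT H T) else 0) := by
            rw [← Finset.sum_add_distrib]
            exact Finset.sum_le_sum fun T _ => hterm T
        _ ≤ δ/2 + δ/2 := add_le_add (le_of_lt hPrTail) hPrTrunc
        _ = δ := by ring
  linarith [hsplit, hmain]
end

section
/- Let M = (S, A, P, R, H, μ) be a finite MDP and π a (possibly non-stationary) deterministic policy, and let T = ((s_0, a_0, r_0), …, (s_{H−1}, a_{H−1}, r_{H−1}), s_H) be a random trajectory obtained by executing π in M. Then for any (s, a, s′) ∈ S × A × S and any δ ∈ (0,1], with probability at least 1 − δ, |Σ_{h=0}^{H−1} 1[(s_h, a_h, s_{h+1}) = (s, a, s′)] − P(s′ | s, a) · Σ_{h=0}^{H−1} 1[(s_h, a_h) = (s, a)]| ≤ √(((4·Q_{δ/2}(Σ_{h=0}^{H−1} 1[(s_h, a_h) = (s, a)]) + 8)/δ) · P(s′ | s, a)). -/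
open Finset

set_option linter.unusedSectionVars false
set_option maxHeartbeats 1000000
namespace Stmt12Aux

variable {S A : Type} [Fintype S] [DecidableEq S] [DecidableEq A]

def DependsOn (m : ℕ) (X : (ℕ → S) → ℝ) : Prop :=
  ∀ f g : ℕ → S, (∀ i ≤ m, f i = g i) → X f = X g

theorem DependsOn.mono {m M : ℕ} {X : (ℕ → S) → ℝ} (h : DependsOn m X) (hm : m ≤ M) :
    DependsOn M X := fun f g hfg => h f g fun i hi => hfg i (hi.trans hm)

theorem extT_eq {m : ℕ} (T : Fin (m + 1) → S) {n : ℕ} (hn : n ≤ m) :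
    extT m T n = T ⟨n, Nat.lt_succ_of_le hn⟩ := by
  simp only [extT]
  congr 1
  exact Fin.ext (by simp [Nat.min_eq_left hn])

theorem extT_snoc_low {m : ℕ} (T : Fin (m + 1) → S) (x : S) {n : ℕ} (hn : n ≤ m) :
    extT (m + 1) (Fin.snoc T x) n = extT m T n := by
  rw [extT_eq _ (hn.trans (Nat.le_succ m)), extT_eq T hn]
  have : (⟨n, Nat.lt_succ_of_le (hn.trans (Nat.le_succ m))⟩ : Fin (m + 2)) =
      Fin.castSucc ⟨n, Nat.lt_succ_of_le hn⟩ := rfl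
  rw [this, Fin.snoc_castSucc]

theorem extT_snoc_last {m : ℕ} (T : Fin (m + 1) → S) (x : S) :
    extT (m + 1) (Fin.snoc T x) (m + 1) = x := by
  rw [extT_eq _ (le_refl (m+1))]
  exact Fin.snoc_last _ _ ▸ rfl

variable (μ : S → ℝ) (P : S → A → S → ℝ) (π : ℕ → S → A)

noncomputable def EE (m : ℕ) (X : (ℕ → S) → ℝ) : ℝ :=
  ∑ T : Fin (m + 1) → S, trajP μ P π m (extT m T) * X (extT m T)

theorem trajP_dep (m : ℕ) : DependsOn m (trajP μ P π m) := by
  intro f g hfg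
  unfold trajP
  rw [hfg 0 (Nat.zero_le m)]
  congr 1
  refine Finset.prod_congr rfl fun h hh => ?_
  rw [Finset.mem_range] at hh
  rw [hfg h hh.le, hfg (h+1) hh]

theorem trajP_succ (m : ℕ) (f : ℕ → S) :
    trajP μ P π (m + 1) f = trajP μ P π m f * P (f m) (π m (f m)) (f (m + 1)) := by
  simp [trajP, Finset.prod_range_succ, mul_assoc]

theorem EE_succ (m : ℕ) (X : (ℕ → S) → ℝ) :
    EE μ P π (m + 1) X = ∑ T : Fin (m + 1) → S, ∑ x : S,
      trajP μ P π m (extT m T) *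
        (P (extT m T m) (π m (extT m T m)) x * X (extT (m + 1) (Fin.snoc T x))) := by
  rw [EE, ← Equiv.sum_comp (Fin.snocEquiv (fun _ : Fin (m + 2) => S))]
  rw [Fintype.sum_prod_type]
  rw [Finset.sum_comm]
  refine Finset.sum_congr rfl fun T _ => Finset.sum_congr rfl fun x _ => ?_
  have hsnoc : (Fin.snocEquiv (fun _ : Fin (m + 2) => S)) (x, T) = Fin.snoc T x := by
    funext i; simp [Fin.snocEquiv]
  rw [hsnoc]
  have h1 : trajP μ P π (m + 1) (extT (m + 1) (Fin.snoc T x)) =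
      trajP μ P π m (extT m T) * P (extT m T m) (π m (extT m T m)) x := by
    rw [trajP_succ]
    rw [trajP_dep μ P π m _ _ (fun i hi => extT_snoc_low T x hi)]
    rw [extT_snoc_low T x (le_refl m), extT_snoc_last]
  rw [h1, mul_assoc]

theorem EE_step (hP1 : ∀ s a, ∑ s', P s a s' = 1) (m : ℕ) {X : (ℕ → S) → ℝ}
    (hX : DependsOn m X) : EE μ P π (m + 1) X = EE μ P π m X := by
  rw [EE_succ]
  refine Finset.sum_congr rfl fun T _ => ?_
  have : ∀ x : S, X (extT (m + 1) (Fin.snoc T x)) = X (extT m T) := fun x =>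
    hX _ _ fun i hi => extT_snoc_low T x hi
  simp only [this]
  rw [← Finset.mul_sum, ← Finset.sum_mul, hP1, one_mul]

theorem EE_desc (hP1 : ∀ s a, ∑ s', P s a s' = 1) {m M : ℕ} (hm : m ≤ M) {X : (ℕ → S) → ℝ}
    (hX : DependsOn m X) : EE μ P π M X = EE μ P π m X := by
  induction M, hm using Nat.le_induction with
  | base => rfl
  | succ M hM ih => rw [EE_step μ P π hP1 M (hX.mono hM), ih]

theorem EE_one (hμ1 : ∑ s, μ s = 1) (hP1 : ∀ s a, ∑ s', P s a s' = 1) (M : ℕ) :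
    EE μ P π M (fun _ => 1) = 1 := by
  rw [EE_desc μ P π hP1 (Nat.zero_le M) (show DependsOn 0 (fun _ : ℕ → S => (1:ℝ)) from fun _ _ _ => rfl)]
  rw [EE, ← Equiv.sum_comp (Equiv.funUnique (Fin 1) S).symm]
  simp only [trajP, Finset.range_zero, Finset.prod_empty, mul_one]
  rw [← hμ1]
  refine Finset.sum_congr rfl fun x _ => ?_
  rfl

theorem trajP_nonneg (hμ0 : ∀ s, 0 ≤ μ s) (hP0 : ∀ s a s', 0 ≤ P s a s') (M : ℕ) (f : ℕ → S) :
    0 ≤ trajP μ P π M f :=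
  mul_nonneg (hμ0 _) (Finset.prod_nonneg fun _ _ => hP0 _ _ _)

theorem EE_mono (hμ0 : ∀ s, 0 ≤ μ s) (hP0 : ∀ s a s', 0 ≤ P s a s') (M : ℕ)
    {X Y : (ℕ → S) → ℝ} (h : ∀ f, X f ≤ Y f) : EE μ P π M X ≤ EE μ P π M Y :=
  Finset.sum_le_sum fun T _ =>
    mul_le_mul_of_nonneg_left (h _) (trajP_nonneg μ P π hμ0 hP0 M _)

theorem EE_nonneg (hμ0 : ∀ s, 0 ≤ μ s) (hP0 : ∀ s a s', 0 ≤ P s a s') (M : ℕ)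
    {X : (ℕ → S) → ℝ} (h : ∀ f, 0 ≤ X f) : 0 ≤ EE μ P π M X :=
  Finset.sum_nonneg fun T _ =>
    mul_nonneg (trajP_nonneg μ P π hμ0 hP0 M _) (h _)

theorem EE_sum (M K : ℕ) (X : ℕ → (ℕ → S) → ℝ) :
    EE μ P π M (fun f => ∑ k ∈ Finset.range K, X k f) =
      ∑ k ∈ Finset.range K, EE μ P π M (X k) := by
  simp only [EE, Finset.mul_sum]
  exact Finset.sum_comm

theorem EE_const_mul (M : ℕ) (c : ℝ) (X : (ℕ → S) → ℝ) :
    EE μ P π M (fun f => c * X f) = c * EE μ P π M X := by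
  simp only [EE, Finset.mul_sum]
  exact Finset.sum_congr rfl fun T _ => by ring

theorem EE_mul_const (M : ℕ) (c : ℝ) (X : (ℕ → S) → ℝ) :
    EE μ P π M (fun f => X f * c) = EE μ P π M X * c := by
  simp only [EE, Finset.sum_mul]
  exact Finset.sum_congr rfl fun T _ => by ring

theorem EE_sub (M : ℕ) (X Y : (ℕ → S) → ℝ) :
    EE μ P π M (fun f => X f - Y f) = EE μ P π M X - EE μ P π M Y := by
  simp only [EE, mul_sub, Finset.sum_sub_distrib]

theorem EE_congr (M : ℕ) {X Y : (ℕ → S) → ℝ} (h : ∀ f, X f = Y f) :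
    EE μ P π M X = EE μ P π M Y := by
  refine Finset.sum_congr rfl fun T _ => by rw [h]

variable (s : S) (a : A) (s' : S)

/-- indicator of pair visit at step k -/
noncomputable def chi2 (k : ℕ) (f : ℕ → S) : ℝ := if (f k, π k (f k)) = (s, a) then 1 else 0

/-- indicator of triple visit at step k -/
noncomputable def chi3 (k : ℕ) (f : ℕ → S) : ℝ :=
  if (f k, π k (f k), f (k + 1)) = (s, a, s') then 1 else 0

theorem chi2_dep (k : ℕ) : DependsOn k (chi2 π s a k) := by
  intro f g h; unfold chi2; rw [h k le_rfl]

theorem chi3_dep (k : ℕ) : DependsOn (k + 1) (chi3 π s a s' k) := by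
  intro f g h; unfold chi3; rw [h k (Nat.le_succ k), h (k + 1) le_rfl]

theorem chi2_nonneg (k : ℕ) (f : ℕ → S) : 0 ≤ chi2 π s a k f := by
  unfold chi2; split <;> norm_num

theorem chi2_le_one (k : ℕ) (f : ℕ → S) : chi2 π s a k f ≤ 1 := by
  unfold chi2; split <;> norm_num

theorem sum_P_ind (u : S) (b : A) :
    ∑ x : S, P u b x * (if (u, b, x) = (s, a, s') then (1:ℝ) else 0) =
      P s a s' * (if (u, b) = (s, a) then (1:ℝ) else 0) := by
  by_cases h : (u, b) = (s, a)
  · rw [if_pos h, mul_one]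
    rw [Prod.mk.injEq] at h; obtain ⟨rfl, rfl⟩ := h
    have hiff : ∀ x : S, ((u, b, x) = (u, b, s')) ↔ x = s' := by
      intro x; rw [Prod.mk.injEq, Prod.mk.injEq]; simp
    simp only [hiff, mul_ite, mul_one, mul_zero]
    rw [Finset.sum_ite_eq' Finset.univ s' (fun x => P u b x), if_pos (Finset.mem_univ s')]
  · rw [if_neg h, mul_zero]
    refine Finset.sum_eq_zero fun x _ => ?_
    rw [if_neg, mul_zero]
    intro hx
    rw [Prod.mk.injEq, Prod.mk.injEq] at hx
    exact h (by rw [Prod.mk.injEq]; exact ⟨hx.1, hx.2.1⟩)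

theorem EE_cond (hP1 : ∀ s a, ∑ s', P s a s' = 1) {k M : ℕ} (hk : k < M)
    {G : (ℕ → S) → ℝ} (hG : DependsOn k G) :
    EE μ P π M (fun f => G f * chi3 π s a s' k f) =
      P s a s' * EE μ P π M (fun f => G f * chi2 π s a k f) := by
  have h3 : DependsOn (k + 1) (fun f => G f * chi3 π s a s' k f) := by
    intro f g h
    show G f * chi3 π s a s' k f = G g * chi3 π s a s' k g
    rw [hG f g (fun i hi => h i (hi.trans (Nat.le_succ k))), chi3_dep π s a s' k f g h]
  have h2 : DependsOn k (fun f => G f * chi2 π s a k f) := by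
    intro f g h
    show G f * chi2 π s a k f = G g * chi2 π s a k g
    rw [hG f g h, chi2_dep π s a k f g h]
  rw [EE_desc μ P π hP1 hk h3, EE_desc μ P π hP1 hk.le h2, EE_succ, EE, Finset.mul_sum]
  refine Finset.sum_congr rfl fun T _ => ?_
  have hG' : ∀ x : S, G (extT (k + 1) (Fin.snoc T x)) = G (extT k T) := fun x =>
    hG _ _ fun i hi => extT_snoc_low T x hi
  have hchi3 : ∀ x : S, chi3 π s a s' k (extT (k + 1) (Fin.snoc T x)) =
      (if (extT k T k, π k (extT k T k), x) = (s, a, s') then (1:ℝ) else 0) := by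
    intro x
    unfold chi3
    rw [extT_snoc_low T x le_rfl, extT_snoc_last]
  simp only [hG', hchi3]
  rw [← Finset.mul_sum]
  have : ∑ x : S, P (extT k T k) (π k (extT k T k)) x *
      (G (extT k T) * if (extT k T k, π k (extT k T k), x) = (s, a, s') then (1:ℝ) else 0) =
      G (extT k T) * (P s a s' * chi2 π s a k (extT k T)) := by
    unfold chi2
    rw [← sum_P_ind P s a s' (extT k T k) (π k (extT k T k))]
    rw [Finset.mul_sum]
    exact Finset.sum_congr rfl fun x _ => by ring
  rw [this]
  ring

/-- martingale difference at step k -/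
noncomputable def Dh (k : ℕ) (f : ℕ → S) : ℝ := chi3 π s a s' k f - P s a s' * chi2 π s a k f

theorem Dh_dep (k : ℕ) : DependsOn (k + 1) (Dh P π s a s' k) := by
  intro f g h
  unfold Dh
  rw [chi3_dep π s a s' k f g h, chi2_dep π s a k f g (fun i hi => h i (hi.trans (Nat.le_succ k)))]

theorem EE_Dh (hP1 : ∀ s a, ∑ s', P s a s' = 1) {k M : ℕ} (hk : k < M)
    {G : (ℕ → S) → ℝ} (hG : DependsOn k G) :
    EE μ P π M (fun f => G f * Dh P π s a s' k f) = 0 := by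
  have : ∀ f, G f * Dh P π s a s' k f =
      G f * chi3 π s a s' k f - P s a s' * (G f * chi2 π s a k f) := by
    intro f; unfold Dh; ring
  rw [EE_congr μ P π M this, EE_sub, EE_const_mul, EE_cond μ P π s a s' hP1 hk hG, sub_self]

theorem Dh_sq (k : ℕ) (f : ℕ → S) :
    (Dh P π s a s' k f) ^ 2 =
      (1 - 2 * P s a s') * chi3 π s a s' k f + (P s a s') ^ 2 * chi2 π s a k f := by
  unfold Dh chi3 chi2
  by_cases h3 : (f k, π k (f k), f (k + 1)) = (s, a, s')
  · have h2 : (f k, π k (f k)) = (s, a) := by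
      rw [Prod.mk.injEq, Prod.mk.injEq] at h3
      rw [Prod.mk.injEq]; exact ⟨h3.1, h3.2.1⟩
    rw [if_pos h3, if_pos h2]; ring
  · rw [if_neg h3]
    by_cases h2 : (f k, π k (f k)) = (s, a)
    · rw [if_pos h2]; ring
    · rw [if_neg h2]; ring

variable (Q : ℝ)

/-- truncation indicator: visit count before step k still `≤ Q` -/
noncomputable def Ind (k : ℕ) (f : ℕ → S) : ℝ :=
  if (nVisits π k (s, a) f : ℝ) ≤ Q then 1 else 0

theorem nVisits_dep {k : ℕ} {z : S × A} (f g : ℕ → S) (h : ∀ i ≤ k, f i = g i) :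
    nVisits π k z f = nVisits π k z g := by
  unfold nVisits
  refine Finset.sum_congr rfl fun i hi => ?_
  rw [Finset.mem_range] at hi
  rw [h i hi.le]

theorem Ind_dep (k : ℕ) : DependsOn k (Ind π s a Q k) := by
  intro f g h
  unfold Ind
  rw [nVisits_dep π f g h]

theorem nVisits_cast (K : ℕ) (f : ℕ → S) :
    ((nVisits π K (s, a) f : ℝ)) = ∑ h ∈ Finset.range K, chi2 π s a h f := by
  unfold nVisits chi2
  push_cast
  exact Finset.sum_congr rfl fun h _ => by split <;> norm_num

theorem nVisits_mono {k K : ℕ} (hk : k ≤ K) (z : S × A) (f : ℕ → S) :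
    nVisits π k z f ≤ nVisits π K z f :=
  Finset.sum_le_sum_of_subset (Finset.range_subset_range.2 hk)

theorem count_le (hQ : 0 ≤ Q) (f : ℕ → S) (K : ℕ) :
    (∑ h ∈ Finset.range K, Ind π s a Q h f * chi2 π s a h f) ≤ (nVisits π K (s, a) f : ℝ) ∧
      (∑ h ∈ Finset.range K, Ind π s a Q h f * chi2 π s a h f) ≤ Q + 1 := by
  induction K with
  | zero => simp [nVisits]; linarith
  | succ K ih =>
    rw [Finset.sum_range_succ, nVisits_cast π s a (K + 1) f, Finset.sum_range_succ,
      ← nVisits_cast π s a K f]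
    have hc2 : 0 ≤ chi2 π s a K f := chi2_nonneg π s a K f
    have hc2' : chi2 π s a K f ≤ 1 := chi2_le_one π s a K f
    by_cases hI : (nVisits π K (s, a) f : ℝ) ≤ Q
    · have : Ind π s a Q K f = 1 := if_pos hI
      rw [this, one_mul]
      exact ⟨by linarith [ih.1], by linarith [ih.1]⟩
    · have : Ind π s a Q K f = 0 := if_neg hI
      rw [this, zero_mul, add_zero]
      exact ⟨by linarith [ih.1], ih.2⟩

/-- the truncated martingale -/
noncomputable def DT (M : ℕ) (f : ℕ → S) : ℝ :=
  ∑ k ∈ Finset.range M, Ind π s a Q k f * Dh P π s a s' k f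

theorem EE_DT_sq (hμ0 : ∀ s, 0 ≤ μ s) (hμ1 : ∑ s, μ s = 1)
    (hP0 : ∀ s a s', 0 ≤ P s a s') (hP1 : ∀ s a, ∑ s', P s a s' = 1)
    (hQ : 0 ≤ Q) (M : ℕ) :
    EE μ P π M (fun f => (DT P π s a s' Q M f) ^ 2) ≤ P s a s' * (Q + 1) := by
  have hp0 : 0 ≤ P s a s' := hP0 s a s'
  -- expand the square
  have hsq : ∀ f, (DT P π s a s' Q M f) ^ 2 = ∑ h ∈ Finset.range M, ∑ k ∈ Finset.range M,
      (Ind π s a Q h f * Dh P π s a s' h f) * (Ind π s a Q k f * Dh P π s a s' k f) := by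
    intro f
    rw [sq, DT, Finset.sum_mul_sum]
  rw [EE_congr μ P π M hsq]
  rw [EE_congr μ P π M (fun f => rfl :
    ∀ f, (∑ h ∈ Finset.range M, ∑ k ∈ Finset.range M,
      (Ind π s a Q h f * Dh P π s a s' h f) * (Ind π s a Q k f * Dh P π s a s' k f)) =
      ∑ h ∈ Finset.range M, (fun g => ∑ k ∈ Finset.range M,
      (Ind π s a Q h g * Dh P π s a s' h g) * (Ind π s a Q k g * Dh P π s a s' k g)) f)]
  rw [EE_sum]
  -- off-diagonal terms vanish
  have hoff : ∀ h k : ℕ, h < M → k < M → h ≠ k →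
      EE μ P π M (fun f =>
        (Ind π s a Q h f * Dh P π s a s' h f) * (Ind π s a Q k f * Dh P π s a s' k f)) = 0 := by
    intro h k hh hk hne
    rcases hne.lt_or_gt with hlt | hlt
    · have hG : DependsOn k (fun f => Ind π s a Q h f * Dh P π s a s' h f * Ind π s a Q k f) := by
        intro f g hfg
        show Ind π s a Q h f * Dh P π s a s' h f * Ind π s a Q k f =
          Ind π s a Q h g * Dh P π s a s' h g * Ind π s a Q k g
        rw [Ind_dep π s a Q h f g (fun i hi => hfg i (hi.trans hlt.le)),
          Dh_dep P π s a s' h f g (fun i hi => hfg i (hi.trans hlt)),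
          Ind_dep π s a Q k f g hfg]
      have := EE_Dh μ P π s a s' hP1 hk hG
      rw [← this]
      exact EE_congr μ P π M fun f => by ring
    · have hG : DependsOn h (fun f => Ind π s a Q k f * Dh P π s a s' k f * Ind π s a Q h f) := by
        intro f g hfg
        show Ind π s a Q k f * Dh P π s a s' k f * Ind π s a Q h f =
          Ind π s a Q k g * Dh P π s a s' k g * Ind π s a Q h g
        rw [Ind_dep π s a Q k f g (fun i hi => hfg i (hi.trans hlt.le)),
          Dh_dep P π s a s' k f g (fun i hi => hfg i (hi.trans hlt)),
          Ind_dep π s a Q h f g hfg]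
      have := EE_Dh μ P π s a s' hP1 hh hG
      rw [← this]
      exact EE_congr μ P π M fun f => by ring
  -- reduce to the diagonal
  have hdiag : ∀ h ∈ Finset.range M,
      EE μ P π M (fun g => ∑ k ∈ Finset.range M,
        (Ind π s a Q h g * Dh P π s a s' h g) * (Ind π s a Q k g * Dh P π s a s' k g)) =
      EE μ P π M (fun g =>
        (Ind π s a Q h g * Dh P π s a s' h g) * (Ind π s a Q h g * Dh P π s a s' h g)) := by
    intro h hh
    rw [Finset.mem_range] at hh
    rw [EE_congr μ P π M (fun g => rfl :
      ∀ g, (∑ k ∈ Finset.range M,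
        (Ind π s a Q h g * Dh P π s a s' h g) * (Ind π s a Q k g * Dh P π s a s' k g)) =
        ∑ k ∈ Finset.range M, (fun g' =>
        (Ind π s a Q h g' * Dh P π s a s' h g') * (Ind π s a Q k g' * Dh P π s a s' k g')) g)]
    rw [EE_sum]
    rw [Finset.sum_eq_single_of_mem h (Finset.mem_range.2 hh)]
    intro k hk hne
    exact hoff h k hh (Finset.mem_range.1 hk) hne.symm
  rw [Finset.sum_congr rfl hdiag]
  -- bound each diagonal term
  have hterm : ∀ h : ℕ, h < M →
      EE μ P π M (fun g =>
        (Ind π s a Q h g * Dh P π s a s' h g) * (Ind π s a Q h g * Dh P π s a s' h g)) ≤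
      P s a s' * EE μ P π M (fun g => Ind π s a Q h g * chi2 π s a h g) := by
    intro h hh
    have hpt : ∀ g, (Ind π s a Q h g * Dh P π s a s' h g) * (Ind π s a Q h g * Dh P π s a s' h g)
        = (1 - 2 * P s a s') * (Ind π s a Q h g * chi3 π s a s' h g)
          + (P s a s') ^ 2 * (Ind π s a Q h g * chi2 π s a h g) := by
      intro g
      have hI : Ind π s a Q h g * Ind π s a Q h g = Ind π s a Q h g := by
        unfold Ind; split <;> norm_num
      calc (Ind π s a Q h g * Dh P π s a s' h g) * (Ind π s a Q h g * Dh P π s a s' h g)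
          = (Ind π s a Q h g * Ind π s a Q h g) * (Dh P π s a s' h g) ^ 2 := by ring
        _ = Ind π s a Q h g * ((1 - 2 * P s a s') * chi3 π s a s' h g
              + (P s a s') ^ 2 * chi2 π s a h g) := by rw [hI, Dh_sq]
        _ = _ := by ring
    rw [EE_congr μ P π M hpt]
    have hsplit : ∀ g, (1 - 2 * P s a s') * (Ind π s a Q h g * chi3 π s a s' h g)
          + (P s a s') ^ 2 * (Ind π s a Q h g * chi2 π s a h g) =
        (1 - 2 * P s a s') * (Ind π s a Q h g * chi3 π s a s' h g)
          - (-((P s a s') ^ 2)) * (Ind π s a Q h g * chi2 π s a h g) := by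
      intro g; ring
    rw [EE_congr μ P π M hsplit, EE_sub, EE_const_mul, EE_const_mul]
    rw [EE_cond μ P π s a s' hP1 hh (Ind_dep π s a Q h)]
    have hE2 : 0 ≤ EE μ P π M (fun g => Ind π s a Q h g * chi2 π s a h g) := by
      refine EE_nonneg μ P π hμ0 hP0 M fun g => ?_
      refine mul_nonneg ?_ (chi2_nonneg π s a h g)
      unfold Ind; split <;> norm_num
    nlinarith [hE2, sq_nonneg (P s a s')]
  calc ∑ h ∈ Finset.range M, EE μ P π M (fun g =>
        (Ind π s a Q h g * Dh P π s a s' h g) * (Ind π s a Q h g * Dh P π s a s' h g))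
      ≤ ∑ h ∈ Finset.range M,
        P s a s' * EE μ P π M (fun g => Ind π s a Q h g * chi2 π s a h g) :=
        Finset.sum_le_sum fun h hh => hterm h (Finset.mem_range.1 hh)
    _ = P s a s' * EE μ P π M (fun g => ∑ h ∈ Finset.range M,
          Ind π s a Q h g * chi2 π s a h g) := by
        rw [EE_sum, Finset.mul_sum]
    _ ≤ P s a s' * (Q + 1) := by
        refine mul_le_mul_of_nonneg_left ?_ hp0
        calc EE μ P π M (fun g => ∑ h ∈ Finset.range M, Ind π s a Q h g * chi2 π s a h g)
            ≤ EE μ P π M (fun _ => Q + 1) :=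
              EE_mono μ P π hμ0 hP0 M fun g => (count_le π s a Q hQ g M).2
          _ = (Q + 1) * EE μ P π M (fun _ => 1) := by
              rw [← EE_const_mul]; exact EE_congr μ P π M fun g => by ring
          _ = Q + 1 := by rw [EE_one μ P π hμ1 hP1, mul_one]

theorem nVisits3_cast (K : ℕ) (f : ℕ → S) :
    ((nVisits3 π K (s, a, s') f : ℝ)) = ∑ h ∈ Finset.range K, chi3 π s a s' h f := by
  unfold nVisits3 chi3
  push_cast
  exact Finset.sum_congr rfl fun h _ => by split <;> norm_num

theorem nVisits_le (K : ℕ) (z : S × A) (f : ℕ → S) : nVisits π K z f ≤ K := by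
  unfold nVisits
  calc ∑ h ∈ Finset.range K, (if (f h, π h (f h)) = z then 1 else 0)
      ≤ ∑ _h ∈ Finset.range K, 1 := Finset.sum_le_sum fun h _ => by split <;> norm_num
    _ = K := by simp

theorem D_sum (K : ℕ) (f : ℕ → S) :
    (nVisits3 π K (s, a, s') f : ℝ) - P s a s' * (nVisits π K (s, a) f : ℝ) =
      ∑ k ∈ Finset.range K, Dh P π s a s' k f := by
  rw [nVisits3_cast π s a s' K f, nVisits_cast π s a K f, Finset.mul_sum,
    ← Finset.sum_sub_distrib]
  rfl

theorem DT_eq (K : ℕ) (f : ℕ → S) (h : (nVisits π K (s, a) f : ℝ) ≤ Q) :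
    DT P π s a s' Q K f =
      (nVisits3 π K (s, a, s') f : ℝ) - P s a s' * (nVisits π K (s, a) f : ℝ) := by
  rw [D_sum P π s a s' K f, DT]
  refine Finset.sum_congr rfl fun k hk => ?_
  rw [Finset.mem_range] at hk
  have hmono : (nVisits π k (s, a) f : ℝ) ≤ (nVisits π K (s, a) f : ℝ) := by
    exact_mod_cast nVisits_mono π hk.le (s, a) f
  have : Ind π s a Q k f = 1 := if_pos (hmono.trans h)
  rw [this, one_mul]

theorem stmt12' (μ : S → ℝ) (P : S → A → S → ℝ) (H : ℕ)
    (hμ0 : ∀ s, 0 ≤ μ s) (hμ1 : ∑ s, μ s = 1)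
    (hP0 : ∀ s a s', 0 ≤ P s a s') (hP1 : ∀ s a, ∑ s', P s a s' = 1)
    (π : ℕ → S → A) (s : S) (a : A) (s' : S)
    (δ : ℝ) (hδ0 : 0 < δ) (hδ1 : δ ≤ 1) :
    1 - δ ≤ ∑ T : Fin (H + 1) → S,
      if |(nVisits3 π H (s, a, s') (extT H T) : ℝ) -
            P s a s' * (nVisits π H (s, a) (extT H T) : ℝ)| ≤
          Real.sqrt
            ((4 * quantNS μ P π H (fun g => (nVisits π H (s, a) g : ℝ)) (δ / 2) + 8) / δ *
              P s a s') then
        trajP μ P π H (extT H T)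
      else 0 := by
  classical
  set Q : ℝ := quantNS μ P π H (fun g => (nVisits π H (s, a) g : ℝ)) (δ / 2) with hQdef
  set t : ℝ := Real.sqrt ((4 * Q + 8) / δ * P s a s') with htdef
  set w : (Fin (H + 1) → S) → ℝ := fun T => trajP μ P π H (extT H T) with hwdef
  have hW0 : ∀ T, 0 ≤ w T := fun T => trajP_nonneg μ P π hμ0 hP0 H _
  have hW1 : ∑ T : Fin (H + 1) → S, w T = 1 := by
    have := EE_one μ P π hμ1 hP1 H
    rw [EE] at this
    simpa using this
  -- the tail function of the quantile
  set F : ℝ → ℝ := fun x => ∑ T : Fin (H + 1) → S,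
    if x ≤ (nVisits π H (s, a) (extT H T) : ℝ) then w T else 0 with hFdef
  have hQF : Q = sSup {x : ℝ | δ / 2 ≤ F x} := by rw [hQdef]; rfl
  have hbdd : BddAbove {x : ℝ | δ / 2 ≤ F x} := by
    refine ⟨(H : ℝ) + 1, fun x hx => ?_⟩
    by_contra hxH
    push_neg at hxH
    have hFx : F x = 0 := by
      refine Finset.sum_eq_zero fun T _ => ?_
      rw [if_neg]
      push_neg
      have h1 : (nVisits π H (s, a) (extT H T) : ℝ) ≤ H := by
        exact_mod_cast nVisits_le π H (s, a) (extT H T)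
      linarith
    rw [Set.mem_setOf_eq, hFx] at hx
    linarith
  have hmem : (0 : ℝ) ∈ {x : ℝ | δ / 2 ≤ F x} := by
    have hF0 : F 0 = 1 := by
      rw [← hW1]
      exact Finset.sum_congr rfl fun T _ => if_pos (Nat.cast_nonneg _)
    rw [Set.mem_setOf_eq, hF0]
    linarith
  have hQ0 : 0 ≤ Q := hQF ▸ le_csSup hbdd hmem
  set m0 : ℕ := ⌊Q⌋.toNat + 1 with hm0def
  have hm0Q : Q < (m0 : ℝ) := by
    have hfl : ((⌊Q⌋.toNat : ℤ)) = ⌊Q⌋ := Int.toNat_of_nonneg (Int.floor_nonneg.2 hQ0)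
    have h2 : (m0 : ℝ) = ((⌊Q⌋.toNat : ℤ) : ℝ) + 1 := by rw [hm0def]; push_cast; ring
    rw [h2, hfl]
    exact Int.lt_floor_add_one Q
  have hFm0 : F (m0 : ℝ) < δ / 2 := by
    by_contra hc
    push_neg at hc
    have : (m0 : ℝ) ≤ Q := hQF ▸ le_csSup hbdd hc
    linarith
  have himp : ∀ f : ℕ → S, Q < (nVisits π H (s, a) f : ℝ) →
      (m0 : ℝ) ≤ (nVisits π H (s, a) f : ℝ) := by
    intro f hf
    have h1 : ((⌊Q⌋ : ℤ) : ℝ) < (nVisits π H (s, a) f : ℝ) :=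
      lt_of_le_of_lt (Int.floor_le Q) hf
    have h2 : (⌊Q⌋ : ℤ) < (nVisits π H (s, a) f : ℤ) := by exact_mod_cast h1
    have h3 : (⌊Q⌋ : ℤ) + 1 ≤ (nVisits π H (s, a) f : ℤ) := h2
    have h4 : (m0 : ℤ) ≤ (nVisits π H (s, a) f : ℤ) := by
      rw [hm0def]
      push_cast [Int.toNat_of_nonneg (Int.floor_nonneg.2 hQ0)]
      exact h3
    exact_mod_cast h4
  -- probabilities of the bad events
  set Pr1 : ℝ := ∑ T : Fin (H + 1) → S,
    if Q < (nVisits π H (s, a) (extT H T) : ℝ) then w T else 0 with hPr1def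
  set Pr2 : ℝ := ∑ T : Fin (H + 1) → S,
    if t < |DT P π s a s' Q H (extT H T)| then w T else 0 with hPr2def
  set Bad : ℝ := ∑ T : Fin (H + 1) → S,
    if t < |(nVisits3 π H (s, a, s') (extT H T) : ℝ) -
      P s a s' * (nVisits π H (s, a) (extT H T) : ℝ)| then w T else 0 with hBaddef
  have hPr1 : Pr1 < δ / 2 := by
    refine lt_of_le_of_lt ?_ hFm0
    refine Finset.sum_le_sum fun T _ => ?_
    by_cases h : Q < (nVisits π H (s, a) (extT H T) : ℝ)
    · rw [if_pos h, if_pos (himp _ h)]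
    · rw [if_neg h]
      split <;> [exact hW0 T; exact le_refl 0]
  have hPr2 : Pr2 ≤ δ / 4 := by
    have hEDT : EE μ P π H (fun f => (DT P π s a s' Q H f) ^ 2) ≤ P s a s' * (Q + 1) :=
      EE_DT_sq μ P π s a s' Q hμ0 hμ1 hP0 hP1 hQ0 H
    have hPr2E : Pr2 = EE μ P π H (fun f => if t < |DT P π s a s' Q H f| then 1 else 0) := by
      rw [hPr2def, EE]
      refine Finset.sum_congr rfl fun T _ => ?_
      split <;> simp [hwdef]
    by_cases hp : P s a s' = 0
    · have ht0 : t = 0 := by rw [htdef, hp, mul_zero, Real.sqrt_zero]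
      have hEDT0 : EE μ P π H (fun f => (DT P π s a s' Q H f) ^ 2) = 0 := by
        refine le_antisymm (by rw [hp, zero_mul] at hEDT; exact hEDT) ?_
        exact EE_nonneg μ P π hμ0 hP0 H fun f => sq_nonneg _
      have hterm : ∀ T : Fin (H + 1) → S,
          w T * (DT P π s a s' Q H (extT H T)) ^ 2 = 0 := by
        have := (Finset.sum_eq_zero_iff_of_nonneg (fun T _ =>
          mul_nonneg (hW0 T) (sq_nonneg (DT P π s a s' Q H (extT H T))))).1 hEDT0
        intro T; exact this T (Finset.mem_univ T)
      have : Pr2 = 0 := by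
        rw [hPr2def]
        refine Finset.sum_eq_zero fun T _ => ?_
        split
        · rename_i hcond
          rw [ht0] at hcond
          have hne : DT P π s a s' Q H (extT H T) ≠ 0 := by
            intro h0; rw [h0, abs_zero] at hcond; exact lt_irrefl 0 hcond
          have := hterm T
          have hsq : DT P π s a s' Q H (extT H T) ^ 2 ≠ 0 := pow_ne_zero 2 hne
          rcases mul_eq_zero.1 this with h | h
          · exact h
          · exact absurd h hsq
        · rfl
      rw [this]; linarith
    · have hppos : 0 < P s a s' := lt_of_le_of_ne (hP0 s a s') (Ne.symm hp)
      have harg : 0 < (4 * Q + 8) / δ * P s a s' := by positivity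
      have ht2 : t ^ 2 = (4 * Q + 8) / δ * P s a s' := Real.sq_sqrt harg.le
      have htpos : 0 < t := Real.sqrt_pos.2 harg
      have hkey : Pr2 * t ^ 2 ≤ P s a s' * (Q + 1) := by
        rw [hPr2E, ← EE_mul_const]
        refine le_trans (EE_mono μ P π hμ0 hP0 H fun f => ?_) hEDT
        by_cases hc : t < |DT P π s a s' Q H f|
        · rw [if_pos hc, one_mul]
          calc t ^ 2 ≤ |DT P π s a s' Q H f| ^ 2 := by
                exact pow_le_pow_left₀ htpos.le hc.le 2
            _ = (DT P π s a s' Q H f) ^ 2 := sq_abs _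
        · rw [if_neg hc, zero_mul]
          exact sq_nonneg _
      have h4 : P s a s' * (Q + 1) ≤ δ / 4 * t ^ 2 := by
        rw [ht2]
        have heq : δ / 4 * ((4 * Q + 8) / δ * P s a s') = (Q + 2) * P s a s' := by
          field_simp
          ring
        rw [heq]
        nlinarith [hppos]
      have := hkey.trans h4
      exact le_of_mul_le_mul_right this (pow_pos htpos 2)
  have hsplit : (∑ T : Fin (H + 1) → S,
      if |(nVisits3 π H (s, a, s') (extT H T) : ℝ) -
            P s a s' * (nVisits π H (s, a) (extT H T) : ℝ)| ≤ t then w T else 0) + Bad = 1 := by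
    rw [hBaddef, ← Finset.sum_add_distrib, ← hW1]
    refine Finset.sum_congr rfl fun T _ => ?_
    by_cases h : |(nVisits3 π H (s, a, s') (extT H T) : ℝ) -
        P s a s' * (nVisits π H (s, a) (extT H T) : ℝ)| ≤ t
    · rw [if_pos h, if_neg (not_lt.2 h), add_zero]
    · rw [if_neg h, if_pos (not_le.1 h), zero_add]
  have hBadle : Bad ≤ Pr1 + Pr2 := by
    rw [hBaddef, hPr1def, hPr2def, ← Finset.sum_add_distrib]
    refine Finset.sum_le_sum fun T _ => ?_
    by_cases hb : t < |(nVisits3 π H (s, a, s') (extT H T) : ℝ) -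
        P s a s' * (nVisits π H (s, a) (extT H T) : ℝ)|
    · rw [if_pos hb]
      by_cases hn : Q < (nVisits π H (s, a) (extT H T) : ℝ)
      · rw [if_pos hn]
        have : (0:ℝ) ≤ if t < |DT P π s a s' Q H (extT H T)| then w T else 0 := by
          split <;> [exact hW0 T; exact le_refl 0]
        linarith
      · rw [if_neg hn]
        push_neg at hn
        have hDTeq := DT_eq P π s a s' Q H (extT H T) hn
        rw [if_pos (by rw [hDTeq]; exact hb), zero_add]
    · rw [if_neg hb]
      have h1 : (0:ℝ) ≤ if Q < (nVisits π H (s, a) (extT H T) : ℝ) then w T else 0 := by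
        split <;> [exact hW0 T; exact le_refl 0]
      have h2 : (0:ℝ) ≤ if t < |DT P π s a s' Q H (extT H T)| then w T else 0 := by
        split <;> [exact hW0 T; exact le_refl 0]
      linarith
  linarith [hsplit, hBadle, hPr1, hPr2]

end Stmt12Aux

theorem stmt12 {S A : Type} [Fintype S] [DecidableEq S] [DecidableEq A]
    (μ : S → ℝ) (P : S → A → S → ℝ) (H : ℕ)
    (hμ0 : ∀ s, 0 ≤ μ s) (hμ1 : ∑ s, μ s = 1)
    (hP0 : ∀ s a s', 0 ≤ P s a s') (hP1 : ∀ s a, ∑ s', P s a s' = 1)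
    (π : ℕ → S → A) (s : S) (a : A) (s' : S)
    (δ : ℝ) (hδ0 : 0 < δ) (hδ1 : δ ≤ 1) :
    1 - δ ≤ ∑ T : Fin (H + 1) → S,
      if |(nVisits3 π H (s, a, s') (extT H T) : ℝ) -
            P s a s' * (nVisits π H (s, a) (extT H T) : ℝ)| ≤
          Real.sqrt
            ((4 * quantNS μ P π H (fun g => (nVisits π H (s, a) g : ℝ)) (δ / 2) + 8) / δ *
              P s a s') then
        trajP μ P π H (extT H T)
      else 0 := by
  exact Stmt12Aux.stmt12' μ P H hμ0 hμ1 hP0 hP1 π s a s' δ hδ0 hδ1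
end
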